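/- arXiv:2102.11507 — 10 statements merged into one kernel-verified Lean document; each statement's English description precedes it below -/
import Mathlib

section
/- Let n ≥ 2 and let f : (Fin n → ℂ) → ℂ be holomorphic on the complement of the origin, i.e. DifferentiableOn ℂ f {0}ᶜ. Then there exists an entire function F : (Fin n → ℂ) → ℂ (Differentiable ℂ F) such that F x = f x for every x ≠ 0. -/
open Complex Metric Set Function MeasureTheory

namespace HartogsAux
variable {n : ℕ}

noncomputable def DA (i : Fin n) : (Fin n → ℂ) →L[ℂ] (Fin n → ℂ) :=
  ContinuousLinearMap.id ℂ (Fin n → ℂ) -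
    (ContinuousLinearMap.proj i).smulRight (Pi.single i 1)

lemma updEq (i : Fin n) (ζ : ℂ) (x : Fin n → ℂ) :
    Function.update x i ζ = DA i x + ζ • (Pi.single i 1 : Fin n → ℂ) := by
  funext j
  rcases eq_or_ne j i with rfl | h
  · simp [DA]
  · simp [DA, Function.update_of_ne h, Pi.single_eq_of_ne h]

lemma updHasFDerivAt (i : Fin n) (ζ : ℂ) (x : Fin n → ℂ) :
    HasFDerivAt (fun x : Fin n → ℂ => Function.update x i ζ) (DA i) x := by
  have h : HasFDerivAt (fun x : Fin n → ℂ => DA i x + ζ • (Pi.single i 1 : Fin n → ℂ)) (DA i) x :=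
    (DA i).hasFDerivAt.add_const _
  exact h.congr_of_eventuallyEq (Filter.Eventually.of_forall fun y => updEq i ζ y)

lemma update_ne_zero (i : Fin n) {ζ : ℂ} (hζ : ζ ≠ 0) (x : Fin n → ℂ) :
    Function.update x i ζ ≠ 0 := by
  intro h
  exact hζ (by simpa using congrFun h i)

lemma sliceHasFDerivAt {f : (Fin n → ℂ) → ℂ} (hf : DifferentiableOn ℂ f {0}ᶜ)
    (i : Fin n) {ζ : ℂ} (hζ : ζ ≠ 0) (x : Fin n → ℂ) :
    HasFDerivAt (fun x : Fin n → ℂ => f (Function.update x i ζ))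
      ((fderiv ℂ f (Function.update x i ζ)).comp (DA i)) x := by
  have h1 : DifferentiableAt ℂ f (Function.update x i ζ) :=
    hf.differentiableAt (isOpen_compl_singleton.mem_nhds (update_ne_zero i hζ x))
  exact h1.hasFDerivAt.comp x (updHasFDerivAt i ζ x)

lemma norm_single_le (i : Fin n) : ‖(Pi.single i 1 : Fin n → ℂ)‖ ≤ 1 := by
  refine (pi_norm_le_iff_of_nonneg zero_le_one).2 fun j => ?_
  rcases eq_or_ne j i with rfl | h
  · simp
  · simp [Pi.single_eq_of_ne h]

lemma norm_DA_le (i : Fin n) : ‖(DA i : (Fin n → ℂ) →L[ℂ] (Fin n → ℂ))‖ ≤ 2 := by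
  refine ContinuousLinearMap.opNorm_le_bound _ (by norm_num) fun x => ?_
  have h1 : ‖(x i) • (Pi.single i 1 : Fin n → ℂ)‖ ≤ ‖x‖ := by
    rw [norm_smul]
    calc ‖x i‖ * ‖(Pi.single i 1 : Fin n → ℂ)‖ ≤ ‖x‖ * 1 :=
      mul_le_mul (norm_le_pi_norm x i) (norm_single_le i) (norm_nonneg _) (norm_nonneg _)
    _ = ‖x‖ := mul_one _
  calc ‖DA i x‖ = ‖x - (x i) • (Pi.single i 1 : Fin n → ℂ)‖ := by simp [DA]
    _ ≤ ‖x‖ + ‖(x i) • (Pi.single i 1 : Fin n → ℂ)‖ := norm_sub_le _ _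
    _ ≤ ‖x‖ + ‖x‖ := by linarith
    _ = 2 * ‖x‖ := by ring

lemma norm_proj_le (i : Fin n) :
    ‖(ContinuousLinearMap.proj i : (Fin n → ℂ) →L[ℂ] ℂ)‖ ≤ 1 :=
  ContinuousLinearMap.opNorm_le_bound _ zero_le_one fun x => by
    simpa using norm_le_pi_norm x i

lemma fderiv_norm_le {f : (Fin n → ℂ) → ℂ} (hf : DifferentiableOn ℂ f {0}ᶜ)
    {y : Fin n → ℂ} {M : ℝ}
    (hy : ∀ z ∈ closedBall y (1/2 : ℝ), z ≠ (0 : Fin n → ℂ))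
    (hM : ∀ z ∈ closedBall y (1/2 : ℝ), ‖f z‖ ≤ M) :
    ‖fderiv ℂ f y‖ ≤ 4 * M := by
  have hM0 : 0 ≤ M := le_trans (norm_nonneg _) (hM y (mem_closedBall_self (by norm_num)))
  have hdy : DifferentiableAt ℂ f y :=
    hf.differentiableAt (isOpen_compl_singleton.mem_nhds (hy y (mem_closedBall_self (by norm_num))))
  refine ContinuousLinearMap.opNorm_le_bound _ (by positivity) fun v => ?_
  rcases eq_or_ne v 0 with rfl | hv
  · simp
  set w : Fin n → ℂ := ((‖v‖ : ℂ))⁻¹ • v with hw_def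
  have hvnorm : (‖v‖ : ℝ) ≠ 0 := norm_ne_zero_iff.2 hv
  have hw : ‖w‖ = 1 := by
    rw [hw_def, norm_smul, norm_inv]
    rw [Complex.norm_real]
    simp [_root_.abs_of_nonneg (norm_nonneg v), hvnorm]
  -- membership of the slice in the closed ball
  have hmem : ∀ z : ℂ, ‖z‖ ≤ 1/2 → y + z • w ∈ closedBall y (1/2 : ℝ) := by
    intro z hz
    rw [mem_closedBall, dist_eq_norm]
    calc ‖y + z • w - y‖ = ‖z • w‖ := by ring_nf
    _ = ‖z‖ * ‖w‖ := by rw [norm_smul]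
    _ ≤ 1/2 := by rw [hw, mul_one]; exact hz
  set g : ℂ → ℂ := fun z => f (y + z • w) with hg_def
  have hgdiff : DifferentiableOn ℂ g (ball (0:ℂ) (1/2)) := by
    intro z hz
    have hz' : y + z • w ∈ closedBall y (1/2 : ℝ) :=
      hmem z (le_of_lt (by simpa using mem_ball_zero_iff.1 hz))
    have h1 : DifferentiableAt ℂ f (y + z • w) :=
      hf.differentiableAt (isOpen_compl_singleton.mem_nhds (hy _ hz'))
    have h2 : DifferentiableAt ℂ (fun z : ℂ => y + z • w) z :=
      (differentiableAt_id.smul_const w).const_add y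
    exact (h1.comp z h2).differentiableWithinAt
  have hgd : HasDerivAt g (fderiv ℂ f y w) 0 := by
    have h2 : HasDerivAt (fun z : ℂ => y + z • w) w 0 := by
      simpa using ((hasDerivAt_id (0:ℂ)).smul_const w).const_add y
    have hdy' : HasFDerivAt f (fderiv ℂ f y) (y + (0:ℂ) • w) := by
      simpa using hdy.hasFDerivAt
    have h3 := hdy'.comp_hasDerivAt 0 h2
    simpa [hg_def, Function.comp_def] using h3
  have h1 : cderiv (1/4) g 0 = deriv g 0 :=
    cderiv_eq_deriv isOpen_ball hgdiff (by norm_num)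
      (closedBall_subset_ball (by norm_num))
  have h2 : ‖cderiv (1/4) g 0‖ ≤ M / (1/4) := by
    refine norm_cderiv_le (by norm_num) fun z hz => ?_
    have hz' : ‖z‖ ≤ 1/2 := by
      have := mem_sphere_zero_iff_norm.1 hz
      rw [this]; norm_num
    exact hM _ (hmem z hz')
  have hkey : ‖fderiv ℂ f y w‖ ≤ 4 * M := by
    have := hgd.deriv
    rw [← this] at *
    calc ‖deriv g 0‖ = ‖cderiv (1/4) g 0‖ := by rw [h1]
    _ ≤ M / (1/4) := h2
    _ = 4 * M := by ring
  have hvw : ((‖v‖ : ℂ)) • w = v := by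
    rw [hw_def, smul_smul]
    rw [mul_inv_cancel₀ (by exact_mod_cast hvnorm), one_smul]
  calc ‖(fderiv ℂ f y) v‖ = ‖(fderiv ℂ f y) (((‖v‖ : ℂ)) • w)‖ := by rw [hvw]
  _ = ‖v‖ * ‖(fderiv ℂ f y) w‖ := by
      rw [_root_.map_smul, norm_smul, Complex.norm_real]
      simp [_root_.abs_of_nonneg (norm_nonneg v)]
  _ ≤ ‖v‖ * (4 * M) := by
      exact mul_le_mul_of_nonneg_left hkey (norm_nonneg v)
  _ = 4 * M * ‖v‖ := by ring


end HartogsAux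

section Core
open HartogsAux

-- The key differentiability of the parameter integral.
lemma core_differentiable (n : ℕ) (i₀ : Fin n) (f : (Fin n → ℂ) → ℂ)
    (hf : DifferentiableOn ℂ f ({0}ᶜ : Set (Fin n → ℂ)))
    (M : ℝ) (hM0 : 0 ≤ M)
    (hM : ∀ y : Fin n → ℂ, ‖y‖ ≤ 3/2 → 1/2 ≤ ‖y i₀‖ → ‖f y‖ ≤ M)
    (hfd : ∀ y : Fin n → ℂ, ‖y‖ ≤ 1 → ‖y i₀‖ = 1 → ‖fderiv ℂ f y‖ ≤ 4 * M)
    (x₀ : Fin n → ℂ) (hx₀ : ‖x₀‖ < 2⁻¹) :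
    DifferentiableAt ℂ (fun x : Fin n → ℂ =>
      (2 * Real.pi * Complex.I : ℂ)⁻¹ •
        (∮ z in C(0,1), (z - x i₀)⁻¹ • f (Function.update x i₀ z))) x₀ := by
  classical
  set cm : ℝ → ℂ := circleMap 0 1 with hcm
  have hcm1 : ∀ θ : ℝ, ‖cm θ‖ = 1 := fun θ => by
    simp [hcm, norm_circleMap_zero]
  have hcm0 : ∀ θ : ℝ, cm θ ≠ 0 := fun θ => by
    intro h; have := hcm1 θ; rw [h] at this; simp at this
  set Ψ : (Fin n → ℂ) → ℝ → ℂ := fun x θ =>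
    deriv cm θ * ((cm θ - x i₀)⁻¹ * f (Function.update x i₀ (cm θ))) with hΨ
  set Ψ' : (Fin n → ℂ) → ℝ → (Fin n → ℂ) →L[ℂ] ℂ := fun x θ =>
    deriv cm θ • ((cm θ - x i₀)⁻¹ • ((fderiv ℂ f (Function.update x i₀ (cm θ))).comp (DA i₀))
      + f (Function.update x i₀ (cm θ)) •
        (((cm θ - x i₀)^2)⁻¹ • (ContinuousLinearMap.proj i₀ : (Fin n → ℂ) →L[ℂ] ℂ))) with hΨ'
  have hderiv_cm : ∀ θ : ℝ, ‖deriv cm θ‖ = 1 := fun θ => by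
    rw [hcm, deriv_circleMap]
    simp [norm_circleMap_zero]
  -- denominator bound
  have hden : ∀ (x : Fin n → ℂ), ‖x‖ ≤ 2⁻¹ → ∀ θ : ℝ, 1/2 ≤ ‖cm θ - x i₀‖ := by
    intro x hx θ
    have h1 : ‖x i₀‖ ≤ 2⁻¹ := le_trans (norm_le_pi_norm x i₀) hx
    have h2 := norm_sub_norm_le (cm θ) (x i₀)
    rw [hcm1 θ] at h2
    linarith
  have hden0 : ∀ (x : Fin n → ℂ), ‖x‖ ≤ 2⁻¹ → ∀ θ : ℝ, cm θ - x i₀ ≠ 0 := by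
    intro x hx θ h
    have := hden x hx θ
    rw [h] at this; simp at this; linarith
  -- the update path has small norm
  have hupd_norm : ∀ (x : Fin n → ℂ), ‖x‖ ≤ 2⁻¹ → ∀ θ : ℝ,
      ‖Function.update x i₀ (cm θ)‖ ≤ 1 := by
    intro x hx θ
    refine (pi_norm_le_iff_of_nonneg zero_le_one).2 fun j => ?_
    rcases eq_or_ne j i₀ with rfl | h
    · rw [Function.update_self]; exact le_of_eq (hcm1 θ)
    · rw [Function.update_of_ne h]
      calc ‖x j‖ ≤ ‖x‖ := norm_le_pi_norm x j
      _ ≤ 1 := by linarith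
  -- differentiability of the integrand in x
  have key : ∀ (θ : ℝ) (x : Fin n → ℂ), ‖x‖ ≤ 2⁻¹ →
      HasFDerivAt (fun x => Ψ x θ) (Ψ' x θ) x := by
    intro θ x hx
    have hcne := hden0 x hx θ
    have hu : HasFDerivAt (fun x : Fin n → ℂ => (cm θ - x i₀)⁻¹)
        (((cm θ - x i₀)^2)⁻¹ • (ContinuousLinearMap.proj i₀ : (Fin n → ℂ) →L[ℂ] ℂ)) x := by
      have h2 : HasDerivAt (fun w : ℂ => cm θ - w) (-1) (x i₀) := by
        simpa using (hasDerivAt_id (x i₀)).const_sub (cm θ)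
      have h3 := h2.inv hcne
      have h1 : HasDerivAt (fun w : ℂ => (cm θ - w)⁻¹) (((cm θ - x i₀)^2)⁻¹) (x i₀) := by
        rw [neg_neg, one_div] at h3
        exact h3
      have h4 := h1.comp_hasFDerivAt x
        (ContinuousLinearMap.proj i₀ : (Fin n → ℂ) →L[ℂ] ℂ).hasFDerivAt
      exact h4
    have hv := sliceHasFDerivAt hf i₀ (hcm0 θ) x
    have hmul := hu.mul hv
    have := hmul.const_mul (deriv cm θ)
    exact this
  -- norm bound for the derivative
  have hb : ∀ (θ : ℝ) (x : Fin n → ℂ), ‖x‖ ≤ 2⁻¹ → ‖Ψ' x θ‖ ≤ 20 * M := by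
    intro θ x hx
    have h2 : (2:ℝ)⁻¹ ≤ ‖cm θ - x i₀‖ := by have := hden x hx θ; linarith
    have hpos : (0:ℝ) < ‖cm θ - x i₀‖ := lt_of_lt_of_le (by norm_num) h2
    have hinv : ‖(cm θ - x i₀)⁻¹‖ ≤ 2 := by
      rw [norm_inv]
      calc ‖cm θ - x i₀‖⁻¹ ≤ ((2:ℝ)⁻¹)⁻¹ := by
            exact inv_anti₀ (by norm_num) h2
      _ = 2 := by norm_num
    have hinv2 : ‖(((cm θ - x i₀)^2)⁻¹ : ℂ)‖ ≤ 4 := by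
      rw [norm_inv, norm_pow]
      calc (‖cm θ - x i₀‖^2)⁻¹ ≤ (((2:ℝ)⁻¹)^2)⁻¹ := by
            apply inv_anti₀ (by positivity)
            exact pow_le_pow_left₀ (by norm_num) h2 2
      _ = 4 := by norm_num
    have hy := hupd_norm x hx θ
    have hyc : ‖(Function.update x i₀ (cm θ)) i₀‖ = 1 := by
      rw [Function.update_self]; exact hcm1 θ
    have hfd1 : ‖fderiv ℂ f (Function.update x i₀ (cm θ))‖ ≤ 4 * M := hfd _ hy hyc
    have hfb : ‖f (Function.update x i₀ (cm θ))‖ ≤ M :=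
      hM _ (by linarith) (by rw [hyc]; norm_num)
    have hA : ‖(cm θ - x i₀)⁻¹ • ((fderiv ℂ f (Function.update x i₀ (cm θ))).comp (DA i₀))‖
        ≤ 16 * M := by
      have hcomp : ‖(fderiv ℂ f (Function.update x i₀ (cm θ))).comp (DA i₀)‖ ≤ (4*M) * 2 := by
        calc ‖(fderiv ℂ f (Function.update x i₀ (cm θ))).comp (DA i₀)‖
            ≤ ‖fderiv ℂ f (Function.update x i₀ (cm θ))‖ * ‖(DA i₀ : (Fin n → ℂ) →L[ℂ] (Fin n → ℂ))‖ :=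
              ContinuousLinearMap.opNorm_comp_le _ _
        _ ≤ (4*M) * 2 := mul_le_mul hfd1 (norm_DA_le i₀) (norm_nonneg _) (by positivity)
      refine le_trans (ContinuousLinearMap.opNorm_smul_le _ _) ?_
      calc ‖(cm θ - x i₀)⁻¹‖ * ‖(fderiv ℂ f (Function.update x i₀ (cm θ))).comp (DA i₀)‖
          ≤ 2 * ((4*M)*2) := mul_le_mul hinv hcomp (norm_nonneg _) (by norm_num)
      _ = 16 * M := by ring
    have hB : ‖f (Function.update x i₀ (cm θ)) • (((cm θ - x i₀)^2)⁻¹ •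
        (ContinuousLinearMap.proj i₀ : (Fin n → ℂ) →L[ℂ] ℂ))‖ ≤ 4 * M := by
      refine le_trans (ContinuousLinearMap.opNorm_smul_le _ _) ?_
      have hin : ‖(((cm θ - x i₀)^2)⁻¹ : ℂ) •
          (ContinuousLinearMap.proj i₀ : (Fin n → ℂ) →L[ℂ] ℂ)‖ ≤ 4 * 1 := by
        refine le_trans (ContinuousLinearMap.opNorm_smul_le _ _) ?_
        exact mul_le_mul hinv2 (norm_proj_le i₀) (norm_nonneg _) (by norm_num)
      calc ‖f (Function.update x i₀ (cm θ))‖ * ‖(((cm θ - x i₀)^2)⁻¹ : ℂ) •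
            (ContinuousLinearMap.proj i₀ : (Fin n → ℂ) →L[ℂ] ℂ)‖
          ≤ M * (4 * 1) := mul_le_mul hfb hin (norm_nonneg _) hM0
      _ = 4 * M := by ring
    calc ‖Ψ' x θ‖ ≤ ‖deriv cm θ‖ * ‖(cm θ - x i₀)⁻¹ • ((fderiv ℂ f (Function.update x i₀ (cm θ))).comp (DA i₀))
          + f (Function.update x i₀ (cm θ)) • (((cm θ - x i₀)^2)⁻¹ •
            (ContinuousLinearMap.proj i₀ : (Fin n → ℂ) →L[ℂ] ℂ))‖ := by
          rw [hΨ']; exact ContinuousLinearMap.opNorm_smul_le _ _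
    _ ≤ 1 * (16 * M + 4 * M) := by
          rw [hderiv_cm θ]
          apply mul_le_mul le_rfl _ (norm_nonneg _) (by norm_num)
          exact le_trans (norm_add_le _ _) (by linarith)
    _ = 20 * M := by ring
  -- continuity of the path θ ↦ update x i₀ (cm θ)
  have hpath : ∀ x : Fin n → ℂ, Continuous fun θ : ℝ => Function.update x i₀ (cm θ) := by
    intro x
    have h1 : Continuous fun θ : ℝ => DA i₀ x + (cm θ) • (Pi.single i₀ 1 : Fin n → ℂ) :=
      continuous_const.add ((continuous_circleMap 0 1).smul continuous_const)
    exact h1.congr fun θ => (updEq i₀ (cm θ) x).symm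
  have hfpath : ∀ x : Fin n → ℂ, Continuous fun θ : ℝ => f (Function.update x i₀ (cm θ)) := by
    intro x
    rw [continuous_iff_continuousAt]
    intro θ
    have h1 : ContinuousAt f (Function.update x i₀ (cm θ)) :=
      hf.continuousOn.continuousAt
        (isOpen_compl_singleton.mem_nhds (update_ne_zero i₀ (hcm0 θ) x))
    exact ContinuousAt.comp (g := f)
      (f := fun θ : ℝ => Function.update x i₀ (cm θ)) h1 (hpath x).continuousAt
  have hderiv_cont : Continuous fun θ : ℝ => deriv cm θ := by
    have h1 : Continuous fun θ : ℝ => circleMap 0 1 θ * Complex.I :=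
      (continuous_circleMap 0 1).mul continuous_const
    exact h1.congr fun θ => (deriv_circleMap 0 1 θ).symm
  have hΨcont : ∀ x : Fin n → ℂ, ‖x‖ ≤ 2⁻¹ → Continuous fun θ => Ψ x θ := by
    intro x hx
    apply hderiv_cont.mul
    exact (((continuous_circleMap 0 1).sub continuous_const).inv₀ (hden0 x hx)).mul (hfpath x)
  -- measurability of the derivative integrand
  have hΨ'meas : AEStronglyMeasurable (fun θ => Ψ' x₀ θ)
      (MeasureTheory.volume.restrict (Set.uIoc (0:ℝ) (2*Real.pi))) := by
    haveI : MeasurableSMul₂ ℂ ((Fin n → ℂ) →L[ℂ] ℂ) := ContinuousSMul.measurableSMul₂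
    have hx₀' : ‖x₀‖ ≤ 2⁻¹ := le_of_lt hx₀
    have h1 : Measurable fun θ : ℝ => fderiv ℂ f (Function.update x₀ i₀ (cm θ)) :=
      (measurable_fderiv ℂ f).comp (hpath x₀).measurable
    have hcompc : Continuous fun A : (Fin n → ℂ) →L[ℂ] ℂ => A.comp (DA i₀) := by
      have := ((ContinuousLinearMap.compSL (Fin n → ℂ) (Fin n → ℂ) ℂ (RingHom.id ℂ)
        (RingHom.id ℂ)).flip (DA i₀)).continuous
      exact this
    have h2 : Measurable fun θ : ℝ =>
        (fderiv ℂ f (Function.update x₀ i₀ (cm θ))).comp (DA i₀) :=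
      hcompc.measurable.comp h1
    have h3 : Measurable fun θ : ℝ =>
        (cm θ - x₀ i₀)⁻¹ • ((fderiv ℂ f (Function.update x₀ i₀ (cm θ))).comp (DA i₀)) :=
      (((continuous_circleMap 0 1).sub continuous_const).inv₀ (hden0 x₀ hx₀')).measurable.smul h2
    have h4 : Measurable fun θ : ℝ =>
        f (Function.update x₀ i₀ (cm θ)) • (((cm θ - x₀ i₀)^2)⁻¹ •
          (ContinuousLinearMap.proj i₀ : (Fin n → ℂ) →L[ℂ] ℂ)) := by
      apply (hfpath x₀).measurable.smul
      exact ((((continuous_circleMap 0 1).sub continuous_const).pow 2).inv₀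
        (fun θ => pow_ne_zero 2 (hden0 x₀ hx₀' θ))).measurable.smul measurable_const
    have h5 : Measurable fun θ => Ψ' x₀ θ := by
      rw [hΨ']
      exact hderiv_cont.measurable.smul (h3.add h4)
    exact (h5.stronglyMeasurable).aestronglyMeasurable
  -- apply differentiation under the integral sign
  set ε : ℝ := 2⁻¹ - ‖x₀‖ with hε
  have hεpos : 0 < ε := by simp [hε]; linarith
  have hball : ∀ x ∈ ball x₀ ε, ‖x‖ ≤ 2⁻¹ := by
    intro x hx
    have h := mem_ball_iff_norm.1 hx
    rw [hε] at h
    have h2 : ‖x‖ ≤ ‖x - x₀‖ + ‖x₀‖ := by simpa using norm_add_le (x - x₀) x₀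
    linarith
  have hmain := intervalIntegral.hasFDerivAt_integral_of_dominated_of_fderiv_le
    (𝕜 := ℂ) (μ := MeasureTheory.volume) (a := (0:ℝ)) (b := 2*Real.pi)
    (F := Ψ) (F' := Ψ') (x₀ := x₀) (bound := fun _ => 20 * M) (Metric.ball_mem_nhds x₀ hεpos)
    ?_ ?_ hΨ'meas ?_ ?_ ?_
  · -- conclude
    have hdiff : DifferentiableAt ℂ (fun x => ∫ θ in (0:ℝ)..(2*Real.pi), Ψ x θ) x₀ :=
      hmain.differentiableAt
    have := hdiff.const_smul ((2 * Real.pi * Complex.I : ℂ)⁻¹)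
    apply this.congr_of_eventuallyEq
    apply Filter.Eventually.of_forall
    intro x
    simp only [circleIntegral, hΨ, hcm, smul_eq_mul, Pi.smul_apply]
  · -- hF_meas
    filter_upwards [Metric.ball_mem_nhds x₀ hεpos] with x hx
    exact ((hΨcont x (hball x hx)).aestronglyMeasurable)
  · -- hF_int
    exact ((hΨcont x₀ (le_of_lt hx₀)).intervalIntegrable _ _)
  · -- h_bound
    apply Filter.Eventually.of_forall
    intro θ _ x hx
    exact hb θ x (hball x hx)
  · -- bound integrable
    exact intervalIntegrable_const
  · -- h_diff
    apply Filter.Eventually.of_forall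
    intro θ _ x hx
    exact key θ x (hball x hx)


-- Cauchy formula: the integral recovers f at points whose i₁-th coordinate is nonzero.
lemma core_eq (n : ℕ) (i₀ i₁ : Fin n) (hne : i₁ ≠ i₀) (f : (Fin n → ℂ) → ℂ)
    (hf : DifferentiableOn ℂ f ({0}ᶜ : Set (Fin n → ℂ)))
    (x : Fin n → ℂ) (hx : ‖x‖ < 1) (hx1 : x i₁ ≠ 0) :
    (2 * Real.pi * Complex.I : ℂ)⁻¹ •
      (∮ z in C(0,1), (z - x i₀)⁻¹ • f (Function.update x i₀ z)) = f x := by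
  have hupd_ne : ∀ z : ℂ, Function.update x i₀ z ≠ 0 := by
    intro z h
    apply hx1
    have := congrFun h i₁
    rwa [Function.update_of_ne hne] at this
  have hd : DifferentiableOn ℂ (fun z : ℂ => f (Function.update x i₀ z)) (closedBall 0 1) := by
    intro z _
    have h1 : DifferentiableAt ℂ f (Function.update x i₀ z) :=
      hf.differentiableAt (isOpen_compl_singleton.mem_nhds (hupd_ne z))
    have h2 : DifferentiableAt ℂ (fun z : ℂ => Function.update x i₀ z) z := by
      have h3 : DifferentiableAt ℂ
          (fun z : ℂ => DA i₀ x + z • (Pi.single i₀ 1 : Fin n → ℂ)) z :=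
        (differentiableAt_id.smul_const _).const_add _
      exact h3.congr_of_eventuallyEq (Filter.Eventually.of_forall fun z => updEq i₀ z x)
    exact (h1.comp z h2).differentiableWithinAt
  have hw : x i₀ ∈ ball (0:ℂ) 1 := by
    rw [mem_ball_zero_iff]
    exact lt_of_le_of_lt (norm_le_pi_norm x i₀) hx
  have hC := hd.circleIntegral_sub_inv_smul hw
  rw [hC, Function.update_eq_self, smul_smul,
    inv_mul_cancel₀ Complex.two_pi_I_ne_zero, one_smul]

end Core

section Main
open HartogsAux MeasureTheory Topology

/-- Hartogs' extension theorem for a point: for `n ≥ 2`, every function holomorphic on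
`ℂⁿ ∖ {0}` extends to an entire function on `ℂⁿ`. -/
theorem hartogs_extension_point (n : ℕ) (hn : 2 ≤ n) (f : (Fin n → ℂ) → ℂ)
    (hf : DifferentiableOn ℂ f ({0}ᶜ : Set (Fin n → ℂ))) :
    ∃ F : (Fin n → ℂ) → ℂ, Differentiable ℂ F ∧ ∀ x : Fin n → ℂ, x ≠ 0 → F x = f x := by
  classical
  set i₀ : Fin n := ⟨0, by omega⟩ with hi₀
  set i₁ : Fin n := ⟨1, by omega⟩ with hi₁
  have hne : i₁ ≠ i₀ := by simp [hi₀, hi₁, Fin.ext_iff]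
  -- bound for f on a compact safety region
  obtain ⟨M, hM0, hM⟩ : ∃ M : ℝ, 0 ≤ M ∧
      ∀ y : Fin n → ℂ, ‖y‖ ≤ 3/2 → 1/2 ≤ ‖y i₀‖ → ‖f y‖ ≤ M := by
    set K : Set (Fin n → ℂ) := closedBall 0 (3/2) ∩ {y | 1/2 ≤ ‖y i₀‖} with hK
    have hKc : IsCompact K := (isCompact_closedBall _ _).inter_right
      (isClosed_le continuous_const (continuous_norm.comp (continuous_apply i₀)))
    have hK0 : K ⊆ {0}ᶜ := by
      intro y hy
      simp only [mem_compl_iff, mem_singleton_iff]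
      intro h
      rw [h] at hy
      have h2 := hy.2
      simp at h2
      linarith
    obtain ⟨C, hC⟩ := hKc.exists_bound_of_continuousOn (hf.continuousOn.mono hK0)
    refine ⟨max C 0, le_max_right _ _, fun y h1 h2 => ?_⟩
    exact le_trans (hC y ⟨mem_closedBall_zero_iff.2 h1, h2⟩) (le_max_left _ _)
  -- uniform bound on fderiv in the safety region
  have hfd : ∀ y : Fin n → ℂ, ‖y‖ ≤ 1 → ‖y i₀‖ = 1 → ‖fderiv ℂ f y‖ ≤ 4 * M := by
    intro y hy1 hy2
    have hcoord : ∀ z : Fin n → ℂ, z ∈ closedBall y (1/2 : ℝ) → 1/2 ≤ ‖z i₀‖ := by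
      intro z hz
      have h1 : ‖z - y‖ ≤ 1/2 := by
        have := mem_closedBall_iff_norm.1 hz
        linarith
      have h2 : ‖z i₀ - y i₀‖ ≤ 1/2 := le_trans (by
        have := norm_le_pi_norm (z - y) i₀
        simpa using this) h1
      have h3 := norm_sub_norm_le (y i₀) (z i₀)
      rw [hy2, norm_sub_rev] at h3
      linarith
    refine fderiv_norm_le hf (fun z hz => ?_) (fun z hz => ?_)
    · intro h
      have := hcoord z hz
      rw [h] at this
      simp at this
      linarith
    · refine hM z ?_ (hcoord z hz)
      have h1 : ‖z - y‖ ≤ 1/2 := by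
        have := mem_closedBall_iff_norm.1 hz
        linarith
      have h2 : ‖z‖ ≤ ‖z - y‖ + ‖y‖ := by simpa using norm_add_le (z - y) y
      linarith
  -- the Cauchy-type integral
  set F : (Fin n → ℂ) → ℂ := fun x =>
    (2 * Real.pi * Complex.I : ℂ)⁻¹ •
      (∮ z in C(0,1), (z - x i₀)⁻¹ • f (Function.update x i₀ z)) with hF_def
  have hFdiff : ∀ x₀ : Fin n → ℂ, ‖x₀‖ < 2⁻¹ → DifferentiableAt ℂ F x₀ := fun x₀ hx₀ =>
    core_differentiable n i₀ f hf M hM0 hM hfd x₀ hx₀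
  have hFeq : ∀ x : Fin n → ℂ, ‖x‖ < 1 → x i₁ ≠ 0 → F x = f x := fun x hx hx1 =>
    core_eq n i₀ i₁ hne f hf x hx hx1
  -- density: F = f on the whole punctured ball
  have hFeq' : ∀ x : Fin n → ℂ, ‖x‖ < 2⁻¹ → x ≠ 0 → F x = f x := by
    intro x hx hx0
    rcases eq_or_ne (x i₁) 0 with h1 | h1
    swap
    · exact hFeq x (lt_trans hx (by norm_num)) h1
    -- approximate along the i₁-coordinate
    have hpath : Continuous fun t : ℂ => Function.update x i₁ t := by
      have h2 : Continuous fun t : ℂ => DA i₁ x + t • (Pi.single i₁ 1 : Fin n → ℂ) :=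
        continuous_const.add (continuous_id.smul continuous_const)
      exact h2.congr fun t => (updEq i₁ t x).symm
    have hupd0 : Function.update x i₁ 0 = x := by
      rw [← h1, Function.update_eq_self]
    have htend : Filter.Tendsto (fun t : ℂ => Function.update x i₁ t) (𝓝[≠] (0:ℂ)) (𝓝 x) := by
      have h0 : Filter.Tendsto (fun t : ℂ => Function.update x i₁ t) (𝓝 (0:ℂ))
          (𝓝 (Function.update x i₁ 0)) := hpath.continuousAt
      rw [hupd0] at h0
      exact h0.mono_left nhdsWithin_le_nhds
    have hFx : Filter.Tendsto (fun t : ℂ => F (Function.update x i₁ t)) (𝓝[≠] (0:ℂ))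
        (𝓝 (F x)) := ((hFdiff x hx).continuousAt.tendsto).comp htend
    have hfx : Filter.Tendsto (fun t : ℂ => f (Function.update x i₁ t)) (𝓝[≠] (0:ℂ))
        (𝓝 (f x)) :=
      ((hf.continuousOn.continuousAt (isOpen_compl_singleton.mem_nhds hx0)).tendsto).comp htend
    have hsmall : ∀ᶠ t in 𝓝[≠] (0:ℂ), ‖t‖ < 1/2 := by
      apply Filter.Eventually.filter_mono nhdsWithin_le_nhds
      have h2 := Metric.ball_mem_nhds (0:ℂ) (show (0:ℝ) < 1/2 by norm_num)
      filter_upwards [h2] with t ht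
      simpa [mem_ball_zero_iff] using ht
    have heq : ∀ᶠ t in 𝓝[≠] (0:ℂ),
        F (Function.update x i₁ t) = f (Function.update x i₁ t) := by
      filter_upwards [hsmall, self_mem_nhdsWithin] with t ht ht0
      have hnorm : ‖Function.update x i₁ t‖ < 1 := by
        refine (pi_norm_lt_iff (by norm_num)).2 fun j => ?_
        rcases eq_or_ne j i₁ with rfl | hj
        · rw [Function.update_self]; linarith
        · rw [Function.update_of_ne hj]
          have : ‖x j‖ ≤ ‖x‖ := norm_le_pi_norm x j
          have hx' : ‖x‖ < 1 := lt_trans hx (by norm_num)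
          linarith
      have hco : (Function.update x i₁ t) i₁ ≠ 0 := by
        rw [Function.update_self]
        exact ht0
      exact hFeq _ hnorm hco
    exact tendsto_nhds_unique (hFx.congr' heq) hfx
  -- assemble the entire extension
  refine ⟨Function.update f 0 (F 0), ?_, fun x hx => Function.update_of_ne hx _ _⟩
  intro x
  rcases eq_or_ne x 0 with rfl | hx
  · have h0 : DifferentiableAt ℂ F 0 := hFdiff 0 (by rw [norm_zero]; norm_num)
    apply h0.congr_of_eventuallyEq
    filter_upwards [Metric.ball_mem_nhds (0 : Fin n → ℂ) (show (0:ℝ) < 2⁻¹ by norm_num)]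
      with y hy
    rcases eq_or_ne y 0 with rfl | hy0
    · simp
    · rw [Function.update_of_ne hy0, ← hFeq' y (mem_ball_zero_iff.1 hy) hy0]
  · have hfx : DifferentiableAt ℂ f x :=
      hf.differentiableAt (isOpen_compl_singleton.mem_nhds hx)
    apply hfx.congr_of_eventuallyEq
    filter_upwards [isOpen_compl_singleton.mem_nhds hx] with y hy
    exact Function.update_of_ne hy _ _

end Main
end

section
/- Let n ≥ 2, let R = MvPolynomial (Fin n) ℂ and let K be its fraction field. Suppose g ∈ K is such that for every i : Fin n there exist p ∈ R and k ∈ ℕ with g * (algebraMap R K (X i))^k = algebraMap R K p. Then g lies in the image of R in K, i.e. g = algebraMap R K q for some polynomial q. -/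
open MvPolynomial

lemma mv_prime_X (m : ℕ) (i : Fin (m + 1)) :
    Prime (X i : MvPolynomial (Fin (m + 1)) ℂ) := by
  let e := (renameEquiv ℂ (Equiv.swap i 0)).trans (finSuccEquiv ℂ m)
  have he : e (X i) = Polynomial.X := by
    simp [e, renameEquiv_apply, rename_X, Equiv.swap_apply_left, finSuccEquiv_X_zero]
  rw [← MulEquiv.prime_iff (p := (X i : MvPolynomial (Fin (m + 1)) ℂ)) e]
  simpa [he] using Polynomial.prime_X (R := MvPolynomial (Fin m) ℂ)

lemma mv_not_dvd (m : ℕ) : ¬ ((X 0 : MvPolynomial (Fin (m + 2)) ℂ) ∣ X 1) := by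
  intro hdvd
  have h10 : (1 : Fin (m + 2)) ≠ 0 := Fin.ne_of_val_ne (by simp)
  have := map_dvd (eval (fun j : Fin (m + 2) => if j = 0 then (0 : ℂ) else 1)) hdvd
  simp [h10] at this

/-- Algebraic Hartogs phenomenon: for `n ≥ 2`, an element of the fraction field of
`R = ℂ[z₁,…,zₙ]` which lies in every localization `R[1/zᵢ]` is a polynomial. -/
theorem algebraic_hartogs (n : ℕ) (hn : 2 ≤ n)
    (g : FractionRing (MvPolynomial (Fin n) ℂ))
    (h : ∀ i : Fin n, ∃ (p : MvPolynomial (Fin n) ℂ) (k : ℕ),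
      g * (algebraMap (MvPolynomial (Fin n) ℂ) (FractionRing (MvPolynomial (Fin n) ℂ))
            (X i)) ^ k
        = algebraMap (MvPolynomial (Fin n) ℂ) (FractionRing (MvPolynomial (Fin n) ℂ)) p) :
    ∃ q : MvPolynomial (Fin n) ℂ,
      g = algebraMap (MvPolynomial (Fin n) ℂ) (FractionRing (MvPolynomial (Fin n) ℂ)) q := by
  obtain ⟨m, rfl⟩ : ∃ m, n = m + 2 := ⟨n - 2, by omega⟩
  let R := MvPolynomial (Fin (m + 2)) ℂ
  let K := FractionRing R
  let φ : R →+* K := algebraMap R K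
  have hφ : Function.Injective φ := IsFractionRing.injective R K
  obtain ⟨a0, b0, hb0, hg⟩ := IsFractionRing.div_surjective (A := R) g
  have hb0' : b0 ≠ 0 := nonZeroDivisors.ne_zero hb0
  obtain ⟨a, b, c, hrel, hca, hcb⟩ :=
    UniqueFactorizationMonoid.exists_reduced_factors' a0 b0 hb0'
  have hc : c ≠ 0 := fun hc => hb0' (by rw [← hcb, hc, zero_mul])
  have hb : b ≠ 0 := fun hb => hb0' (by rw [← hcb, hb, mul_zero])
  have hφb : φ b ≠ 0 := fun hb' => hb (hφ (by rw [hb', map_zero]))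
  have hgab : g = φ a / φ b := by
    rw [← hg, ← hca, ← hcb, map_mul, map_mul]
    rw [mul_div_mul_left]
    exact fun hc' => hc (hφ (by rw [hc', map_zero]))
  have key : ∀ i : Fin (m + 2), ∃ k, b ∣ (X i : R) ^ k := by
    intro i
    obtain ⟨p, k, hpk⟩ := h i
    refine ⟨k, ?_⟩
    rw [hgab] at hpk
    rw [div_mul_eq_mul_div, div_eq_iff hφb, ← map_pow, ← map_mul, ← map_mul] at hpk
    have heq : a * X i ^ k = p * b := hφ hpk
    have hdvd : b ∣ (X i : R) ^ k * a := ⟨p, by linear_combination heq⟩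
    exact hrel.symm.dvd_of_dvd_mul_right hdvd
  have hbu : IsUnit b := by
    by_contra hbu
    obtain ⟨q, hqirr, hqb⟩ := WfDvdMonoid.exists_irreducible_factor hbu hb
    have hq : Prime q := (UniqueFactorizationMonoid.irreducible_iff_prime).mp hqirr
    obtain ⟨k0, hk0⟩ := key 0
    obtain ⟨k1, hk1⟩ := key 1
    have hq0 : q ∣ (X 0 : R) := hq.dvd_of_dvd_pow (hqb.trans hk0)
    have hq1 : q ∣ (X 1 : R) := hq.dvd_of_dvd_pow (hqb.trans hk1)
    have ha0 : Associated q (X 0 : R) :=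
      hqirr.associated_of_dvd (mv_prime_X (m + 1) 0).irreducible hq0
    have ha1 : Associated q (X 1 : R) :=
      hqirr.associated_of_dvd (mv_prime_X (m + 1) 1).irreducible hq1
    exact mv_not_dvd m ((ha0.symm.trans ha1).dvd)
  refine ⟨a * ↑hbu.unit⁻¹, ?_⟩
  show g = φ (a * ↑hbu.unit⁻¹)
  rw [hgab, div_eq_iff hφb, ← map_mul]
  congr 1
  rw [mul_assoc]
  nth_rewrite 2 [← hbu.unit_spec]
  rw [Units.inv_mul, mul_one]
end

section
/- Let n ≥ 3 and E = EuclideanSpace ℝ (Fin n). Consider the set V of vector fields X : E → E of the form X x = a + A x + c • x + (2 * ⟪x, b⟫) • x − (‖x‖^2) • b, where a, b ∈ E, c ∈ ℝ, and A : E →ₗ[ℝ] E satisfies ⟪A v, w⟫ = −⟪v, A w⟫ for all v, w. Then (1) V is an ℝ-submodule of E → E of finite rank (n+1)(n+2)/2, and (2) every X ∈ V is a conformal Killing field on all of E, i.e. there is λ : E → ℝ with ⟪(fderiv ℝ X x) v, w⟫ + ⟪v, (fderiv ℝ X x) w⟫ = λ x * ⟪v, w⟫ for all x, v, w. -/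
open scoped RealInnerProductSpace

noncomputable def skewS (n : ℕ) : Submodule ℝ (EuclideanSpace ℝ (Fin n) →ₗ[ℝ] EuclideanSpace ℝ (Fin n)) where
  carrier := {A | ∀ v w : EuclideanSpace ℝ (Fin n), ⟪A v, w⟫ = -⟪v, A w⟫}
  add_mem' := by
    intro A B hA hB v w
    simp [inner_add_left, inner_add_right, hA v w, hB v w]; ring
  zero_mem' := by intro v w; simp
  smul_mem' := by
    intro r A hA v w
    simp [inner_smul_left, inner_smul_right, hA v w]

noncomputable def Phi (n : ℕ) :
    (EuclideanSpace ℝ (Fin n) × EuclideanSpace ℝ (Fin n) × ℝ × skewS n) →ₗ[ℝ]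
      (EuclideanSpace ℝ (Fin n) → EuclideanSpace ℝ (Fin n)) where
  toFun p := fun x =>
    p.1 + (p.2.2.2 : EuclideanSpace ℝ (Fin n) →ₗ[ℝ] EuclideanSpace ℝ (Fin n)) x
      + p.2.2.1 • x + (2 * ⟪x, p.2.1⟫) • x - (‖x‖ ^ 2) • p.2.1
  map_add' p q := by
    funext x
    simp only [Pi.add_apply, Prod.fst_add, Prod.snd_add, Submodule.coe_add,
      LinearMap.add_apply, inner_add_right, smul_add, add_smul, mul_add]
    module
  map_smul' r p := by
    funext x
    simp only [Prod.smul_fst, Prod.smul_snd, Submodule.coe_smul, LinearMap.smul_apply,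
      inner_smul_right, smul_eq_mul, RingHom.id_apply, Pi.smul_apply, smul_add, smul_sub,
      smul_smul]
    module
theorem Phi_inj (n : ℕ) (hn : 1 ≤ n) : Function.Injective (Phi n) := by
  rw [← LinearMap.ker_eq_bot, LinearMap.ker_eq_bot']
  rintro ⟨a, b, c, A, hA⟩ h
  have h' : ∀ x : EuclideanSpace ℝ (Fin n),
      a + (A : _ →ₗ[ℝ] _) x + c • x + (2 * ⟪x, b⟫) • x - (‖x‖ ^ 2) • b = 0 := by
    intro x
    exact congrFun h x
  have ha : a = 0 := by simpa using h' 0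
  subst ha
  have hlin : ∀ x : EuclideanSpace ℝ (Fin n), (A : _ →ₗ[ℝ] _) x + c • x = 0 := by
    intro x
    have h1 := h' x
    have h2 := h' (-x)
    simp only [map_neg, inner_neg_left, norm_neg, smul_neg, neg_smul, mul_neg, neg_neg,
      zero_add] at h1 h2
    have h4 : (2:ℝ) • ((A : _ →ₗ[ℝ] _) x + c • x) = 0 := by
      have key : (2:ℝ) • ((A : _ →ₗ[ℝ] _) x + c • x) =
          ((A : _ →ₗ[ℝ] _) x + c • x + (2 * ⟪x, b⟫) • x - (‖x‖ ^ 2) • b)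
          - (-(A : _ →ₗ[ℝ] _) x + -(c • x) + (2 * ⟪x, b⟫) • x - (‖x‖ ^ 2) • b) := by
        module
      rw [key, h1, h2]; simp
    have := smul_eq_zero.mp h4
    simpa using this
  have hquad : ∀ x : EuclideanSpace ℝ (Fin n), (2 * ⟪x, b⟫) • x - (‖x‖ ^ 2) • b = 0 := by
    intro x
    have h1 := h' x
    rw [show (0:EuclideanSpace ℝ (Fin n)) + (A : _ →ₗ[ℝ] _) x + c • x + (2 * ⟪x, b⟫) • x
        - (‖x‖ ^ 2) • b = ((A : _ →ₗ[ℝ] _) x + c • x) + ((2 * ⟪x, b⟫) • x - (‖x‖ ^ 2) • b)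
        by module] at h1
    rw [hlin x] at h1
    simpa using h1
  have hb : b = 0 := by
    have hq := hquad b
    rw [real_inner_self_eq_norm_sq] at hq
    have h5 : (‖b‖ ^ 2) • b = 0 := by
      rw [show (2 * ‖b‖ ^ 2) • b - (‖b‖ ^ 2) • b = (‖b‖ ^ 2) • b by module] at hq
      exact hq
    rcases smul_eq_zero.mp h5 with h | h
    · exact norm_eq_zero.mp (pow_eq_zero_iff two_ne_zero |>.mp h)
    · exact h
  subst hb
  have hc : c = 0 := by
    set x : EuclideanSpace ℝ (Fin n) := EuclideanSpace.single ⟨0, hn⟩ 1 with hx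
    have h1 : ⟪(A : _ →ₗ[ℝ] _) x, x⟫ = 0 := by
      have h0 := hA x x
      have hcomm := real_inner_comm ((A : _ →ₗ[ℝ] _) x) x
      linarith
    have h2 := hlin x
    have h3 : ⟪(A : _ →ₗ[ℝ] _) x + c • x, x⟫ = (0:ℝ) := by rw [h2]; simp
    rw [inner_add_left, real_inner_smul_left, h1] at h3
    have hxx : ⟪x, x⟫ = (1:ℝ) := by
      rw [hx]; simp [EuclideanSpace.inner_single_right, EuclideanSpace.single_apply]
    rw [hxx] at h3; linarith
  subst hc
  have hA0 : A = 0 := LinearMap.ext fun x => by simpa using hlin x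
  simp [Prod.ext_iff, hA0]
noncomputable def skewCoords (n : ℕ) :
    skewS n →ₗ[ℝ] ({p : Fin n × Fin n // p.1 < p.2} → ℝ) where
  toFun A := fun p => ((A : EuclideanSpace ℝ (Fin n) →ₗ[ℝ] EuclideanSpace ℝ (Fin n))
    (EuclideanSpace.single p.1.1 1)) p.1.2
  map_add' A B := by funext p; simp
  map_smul' r A := by funext p; simp

theorem skew_entry (n : ℕ) (A : skewS n) (i j : Fin n) :
    ((A : EuclideanSpace ℝ (Fin n) →ₗ[ℝ] EuclideanSpace ℝ (Fin n))
      (EuclideanSpace.single i 1)) j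
    = -(((A : EuclideanSpace ℝ (Fin n) →ₗ[ℝ] EuclideanSpace ℝ (Fin n))
      (EuclideanSpace.single j 1)) i) := by
  have h := A.2 (EuclideanSpace.single i 1) (EuclideanSpace.single j 1)
  rw [EuclideanSpace.inner_single_right, EuclideanSpace.inner_single_left] at h
  simpa [real_inner_comm] using h

theorem skewCoords_bij (n : ℕ) : Function.Bijective (skewCoords n) := by
  constructor
  · rw [← LinearMap.ker_eq_bot, LinearMap.ker_eq_bot']
    intro A hA0
    have hzero : ∀ i j : Fin n,
        ((A : EuclideanSpace ℝ (Fin n) →ₗ[ℝ] EuclideanSpace ℝ (Fin n))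
          (EuclideanSpace.single i 1)) j = 0 := by
      intro i j
      rcases lt_trichotomy i j with h | h | h
      · exact congrFun hA0 ⟨(i, j), h⟩
      · subst h
        have := skew_entry n A i i
        linarith
      · rw [skew_entry n A i j]
        have := congrFun hA0 ⟨(j, i), h⟩
        simp only [Pi.zero_apply] at this ⊢
        rw [show ((A : EuclideanSpace ℝ (Fin n) →ₗ[ℝ] EuclideanSpace ℝ (Fin n))
          (EuclideanSpace.single j 1)) i = 0 from this]
        simp
    apply Subtype.ext
    apply Module.Basis.ext (EuclideanSpace.basisFun (Fin n) ℝ).toBasis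
    intro i
    ext j
    simpa [EuclideanSpace.basisFun_apply] using hzero i j
  · intro f
    classical
    set M : Matrix (Fin n) (Fin n) ℝ := fun k l =>
      if h : l < k then f ⟨(l, k), h⟩ else if h : k < l then -f ⟨(k, l), h⟩ else 0 with hM
    have hMskew : M.conjTranspose = -M := by
      ext k l
      simp only [Matrix.conjTranspose_apply, Matrix.neg_apply, star_trivial]
      simp only [hM]
      rcases lt_trichotomy k l with h | h | h
      · rw [dif_pos h, dif_neg (asymm h), dif_pos h]; ring
      · subst h; simp
      · rw [dif_neg (asymm h), dif_pos h, dif_neg (asymm h), dif_pos h]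
    have hskew : Matrix.toEuclideanLin M ∈ skewS n := by
      intro v w
      have hadj : LinearMap.adjoint (Matrix.toEuclideanLin M) = -(Matrix.toEuclideanLin M) := by
        rw [← Matrix.toEuclideanLin_conjTranspose_eq_adjoint, hMskew, map_neg]
      calc ⟪(Matrix.toEuclideanLin M) v, w⟫
          = ⟪v, LinearMap.adjoint (Matrix.toEuclideanLin M) w⟫ := by
            rw [LinearMap.adjoint_inner_right]
        _ = -⟪v, (Matrix.toEuclideanLin M) w⟫ := by rw [hadj]; simp
    refine ⟨⟨Matrix.toEuclideanLin M, hskew⟩, ?_⟩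
    funext p
    obtain ⟨⟨i, j⟩, hij⟩ := p
    show ((Matrix.toEuclideanLin M) (EuclideanSpace.single i 1)) j = f ⟨(i, j), hij⟩
    rw [Matrix.toEuclideanLin_apply]
    classical
    have hsingle : (WithLp.equiv 2 (Fin n → ℝ)) (EuclideanSpace.single i (1:ℝ)) = Pi.single i 1 :=
      rfl
    have : M.mulVec ((WithLp.equiv 2 (Fin n → ℝ)) (EuclideanSpace.single i (1:ℝ))) j
        = f ⟨(i, j), hij⟩ := by
      rw [hsingle, Matrix.mulVec_single_one, Matrix.col_apply]
      simp only [mul_one, hM]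
      rw [dif_pos hij]
    exact this
def pairEquiv (n : ℕ) : {p : Fin n × Fin n // p.1 < p.2} ≃ (Σ i : Fin n, Fin i.1) where
  toFun p := ⟨p.1.2, ⟨p.1.1.1, p.2⟩⟩
  invFun q := ⟨(⟨q.2.1, lt_trans q.2.2 q.1.2⟩, q.1), q.2.2⟩
  left_inv := by rintro ⟨⟨⟨i, hi⟩, j⟩, h⟩; rfl
  right_inv := by rintro ⟨i, ⟨j, hj⟩⟩; rfl

theorem card_pairs (n : ℕ) : Fintype.card {p : Fin n × Fin n // p.1 < p.2} = n * (n - 1) / 2 := by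
  rw [Fintype.card_congr (pairEquiv n), Fintype.card_sigma]
  simp only [Fintype.card_fin]
  rw [show (∑ x : Fin n, (x:ℕ)) = ∑ i ∈ Finset.range n, i from
    Fin.sum_univ_eq_sum_range (fun i => i) n]
  exact Finset.sum_range_id n

theorem finrank_skewS (n : ℕ) : Module.finrank ℝ (skewS n) = n * (n - 1) / 2 := by
  have e : skewS n ≃ₗ[ℝ] ({p : Fin n × Fin n // p.1 < p.2} → ℝ) :=
    LinearEquiv.ofBijective (skewCoords n) (skewCoords_bij n)
  rw [e.finrank_eq, Module.finrank_pi, card_pairs]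
theorem fderiv_X (n : ℕ) (a b : EuclideanSpace ℝ (Fin n)) (c : ℝ)
    (A : EuclideanSpace ℝ (Fin n) →ₗ[ℝ] EuclideanSpace ℝ (Fin n))
    (x v : EuclideanSpace ℝ (Fin n)) :
    fderiv ℝ (fun y => a + A y + c • y + (2 * ⟪y, b⟫) • y - (‖y‖ ^ 2) • b) x v
      = A v + c • v + (2 * ⟪v, b⟫) • x + (2 * ⟪x, b⟫) • v - (2 * ⟪x, v⟫) • b := by
  have hfun : (fun y : EuclideanSpace ℝ (Fin n) =>
      a + A y + c • y + (2 * ⟪y, b⟫) • y - (‖y‖ ^ 2) • b)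
      = fun y => a + A y + c • y + (2 * ⟪y, b⟫) • y - ⟪y, y⟫ • b := by
    funext y; rw [real_inner_self_eq_norm_sq]
  rw [hfun]
  have h2 : HasFDerivAt (fun y : EuclideanSpace ℝ (Fin n) => A y)
      (LinearMap.toContinuousLinearMap A) x :=
    (LinearMap.toContinuousLinearMap A).hasFDerivAt
  have h3 : HasFDerivAt (fun y : EuclideanSpace ℝ (Fin n) => c • y)
      (c • ContinuousLinearMap.id ℝ _) x := (hasFDerivAt_id x).const_smul c
  have hib : HasFDerivAt (fun y : EuclideanSpace ℝ (Fin n) => ⟪y, b⟫)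
      ((fderivInnerCLM ℝ (x, b)).comp ((ContinuousLinearMap.id ℝ _).prod 0)) x :=
    (hasFDerivAt_id x).inner ℝ (hasFDerivAt_const b x)
  have hphi := hib.const_mul (2 : ℝ)
  have h4 := hphi.smul (hasFDerivAt_id x)
  have hii : HasFDerivAt (fun y : EuclideanSpace ℝ (Fin n) => ⟪y, y⟫)
      ((fderivInnerCLM ℝ (x, x)).comp ((ContinuousLinearMap.id ℝ _).prod
        (ContinuousLinearMap.id ℝ _))) x :=
    (hasFDerivAt_id x).inner ℝ (hasFDerivAt_id x)
  have h5 := hii.smul_const b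
  have htot := ((((hasFDerivAt_const a x).add h2).add h3).add h4).sub h5
  simp only [id_eq] at htot
  rw [show fderiv ℝ (fun y : EuclideanSpace ℝ (Fin n) =>
      a + A y + c • y + (2 * ⟪y, b⟫) • y - ⟪y, y⟫ • b) x = _ from htot.fderiv]
  simp only [ContinuousLinearMap.add_apply, ContinuousLinearMap.sub_apply,
    ContinuousLinearMap.coe_comp', Function.comp_apply, ContinuousLinearMap.prod_apply,
    ContinuousLinearMap.smulRight_apply, ContinuousLinearMap.smul_apply,
    ContinuousLinearMap.id_apply, ContinuousLinearMap.zero_apply, fderivInnerCLM_apply,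
    ContinuousLinearMap.coe_smul', Pi.smul_apply, LinearMap.coe_toContinuousLinearMap',
    smul_eq_mul]
  simp only [inner_zero_right, add_zero, zero_add]
  rw [real_inner_comm b v, real_inner_comm x v]
  module


/-- The space of vector fields `x ↦ a + A x + c • x + (2⟪x,b⟫) • x − ‖x‖² • b` (with `A`
skew-adjoint) on flat `ℝⁿ`, `n ≥ 3`, is an `ℝ`-submodule of `E → E` of finite rank
`(n+1)(n+2)/2`, and each of its members is a conformal Killing field on all of `ℝⁿ`. -/
theorem conformal_killing_flat_space (n : ℕ) (hn : 3 ≤ n) :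
    ∃ V : Submodule ℝ (EuclideanSpace ℝ (Fin n) → EuclideanSpace ℝ (Fin n)),
      (∀ X : EuclideanSpace ℝ (Fin n) → EuclideanSpace ℝ (Fin n),
        X ∈ V ↔ ∃ (a b : EuclideanSpace ℝ (Fin n)) (c : ℝ)
            (A : EuclideanSpace ℝ (Fin n) →ₗ[ℝ] EuclideanSpace ℝ (Fin n)),
          (∀ v w : EuclideanSpace ℝ (Fin n), ⟪A v, w⟫ = -⟪v, A w⟫) ∧
          ∀ x : EuclideanSpace ℝ (Fin n),
            X x = a + A x + c • x + (2 * ⟪x, b⟫) • x - (‖x‖ ^ 2) • b) ∧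
      Module.finrank ℝ V = (n + 1) * (n + 2) / 2 ∧
      (∀ X : EuclideanSpace ℝ (Fin n) → EuclideanSpace ℝ (Fin n), X ∈ V →
        ∃ lam : EuclideanSpace ℝ (Fin n) → ℝ,
          ∀ (x v w : EuclideanSpace ℝ (Fin n)),
            ⟪(fderiv ℝ X x) v, w⟫ + ⟪v, (fderiv ℝ X x) w⟫ = lam x * ⟪v, w⟫) := by
  refine ⟨LinearMap.range (Phi n), ?_, ?_, ?_⟩
  · intro X
    constructor
    · rintro ⟨⟨a, b, c, A, hA⟩, rfl⟩
      exact ⟨a, b, c, A, hA, fun x => rfl⟩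
    · rintro ⟨a, b, c, A, hA, hX⟩
      exact ⟨(a, b, c, ⟨A, hA⟩), (funext fun x => (hX x).symm)⟩
  · rw [LinearMap.finrank_range_of_inj (Phi_inj n (by omega))]
    rw [Module.finrank_prod, Module.finrank_prod, Module.finrank_prod,
      finrank_euclideanSpace_fin, Module.finrank_self, finrank_skewS]
    obtain ⟨m, rfl⟩ : ∃ m, n = m + 3 := ⟨n - 3, by omega⟩
    obtain ⟨k, hk⟩ := Nat.even_mul_succ_self m
    have ha : (m + 3) * ((m + 3) - 1) = k + k + (4 * m + 6) := by
      have h31 : (m + 3) - 1 = m + 2 := by omega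
      rw [h31, ← hk]; ring
    have hb : (m + 3 + 1) * (m + 3 + 2) = k + k + (8 * m + 20) := by
      rw [← hk]; ring
    rw [ha, hb]
    omega
  · rintro X ⟨⟨a, b, c, A, hA⟩, rfl⟩
    refine ⟨fun x => 2 * c + 4 * ⟪x, b⟫, fun x v w => ?_⟩
    have hXeq : Phi n (a, b, c, ⟨A, hA⟩)
        = fun y => a + A y + c • y + (2 * ⟪y, b⟫) • y - (‖y‖ ^ 2) • b := rfl
    rw [hXeq, fderiv_X n a b c A x v, fderiv_X n a b c A x w]
    simp only [inner_add_left, inner_add_right, inner_sub_left, inner_sub_right,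
      real_inner_smul_left, real_inner_smul_right]
    rw [hA v w, real_inner_comm x v, real_inner_comm b w]
    ring
end

section
/- Let U ⊆ ℂ be open and let X : ℂ → ℂ be real-differentiable on U (DifferentiableOn ℝ X U). Then the following are equivalent: (1) there exists λ : ℂ → ℝ such that for all z ∈ U and all v w : ℂ one has ⟪(fderiv ℝ X z) v, w⟫ + ⟪v, (fderiv ℝ X z) w⟫ = λ z * ⟪v, w⟫, where ⟪v, w⟫ = re(v * conj w) is the real inner product on ℂ; (2) X is holomorphic on U, i.e. DifferentiableOn ℂ X U. -/
open Complex

/-- The two-dimensional conformal Killing equation: identifying `ℝ²` with `ℂ` with the real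
inner product `⟪v, w⟫ = re (v * conj w)`, a real-differentiable vector field on an open set
`U ⊆ ℂ` is a conformal Killing field iff it is holomorphic on `U`. -/
theorem conformal_killing_iff_holomorphic (U : Set ℂ) (hU : IsOpen U)
    (X : ℂ → ℂ) (hX : DifferentiableOn ℝ X U) :
    (∃ lam : ℂ → ℝ, ∀ z ∈ U, ∀ v w : ℂ,
        ((fderiv ℝ X z) v * (starRingEnd ℂ) w).re + (v * (starRingEnd ℂ) ((fderiv ℝ X z) w)).re
          = lam z * (v * (starRingEnd ℂ) w).re) ↔
    DifferentiableOn ℂ X U := by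
  constructor
  · rintro ⟨lam, h⟩ z hz
    have hd : DifferentiableAt ℝ X z := (hX z hz).differentiableAt (hU.mem_nhds hz)
    set L := fderiv ℝ X z with hL
    -- Cauchy–Riemann from the conformal Killing equation
    have h1 := h z hz 1 1
    have h2 := h z hz Complex.I Complex.I
    have h3 := h z hz 1 Complex.I
    have key : L Complex.I = Complex.I * L 1 := by
      rw [← hL] at h1 h2 h3
      simp only [Complex.mul_re, Complex.mul_im, Complex.conj_re, Complex.conj_im,
        Complex.I_re, Complex.I_im, Complex.one_re, Complex.one_im] at h1 h2 h3
      apply Complex.ext <;>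
        simp only [Complex.mul_re, Complex.mul_im, Complex.I_re, Complex.I_im] <;> nlinarith
    have hLv : ∀ u : ℂ, L u = u * L 1 := by
      intro u
      have h4 : L u = u.re • L 1 + u.im • L Complex.I := by
        rw [← map_smul, ← map_smul, ← map_add]
        congr 1
        simp [Complex.real_smul, u.re_add_im]
      rw [h4, key]
      simp only [Complex.real_smul]
      calc (u.re : ℂ) * L 1 + (u.im : ℂ) * (Complex.I * L 1)
          = ((u.re : ℂ) + (u.im : ℂ) * Complex.I) * L 1 := by ring
        _ = u * L 1 := by rw [u.re_add_im]
    refine ((differentiableAt_iff_restrictScalars ℝ hd).mpr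
      ⟨(L 1) • ContinuousLinearMap.id ℂ ℂ, ?_⟩).differentiableWithinAt
    ext v
    rw [← hL]
    simp [hLv v, mul_comm]
  · intro hXc
    refine ⟨fun z => 2 * (deriv X z).re, fun z hz v w => ?_⟩
    have hd : DifferentiableAt ℂ X z := (hXc z hz).differentiableAt (hU.mem_nhds hz)
    have hf : fderiv ℝ X z = (fderiv ℂ X z).restrictScalars ℝ :=
      hd.fderiv_restrictScalars ℝ
    have hv : ∀ u : ℂ, (fderiv ℝ X z) u = deriv X z * u := by
      intro u
      rw [hf]
      show (fderiv ℂ X z) u = deriv X z * u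
      have h5 : (fderiv ℂ X z) u = u • (fderiv ℂ X z) 1 := by
        rw [← map_smul]; simp
      rw [h5, fderiv_apply_one_eq_deriv]
      simp [smul_eq_mul, mul_comm]
    rw [hv v, hv w]
    simp only [Complex.mul_re, Complex.mul_im, Complex.conj_re, Complex.conj_im, map_mul]
    ring
end

section
/- Let m : ℕ and let f ∈ MvPolynomial (Fin 2) ℝ be homogeneous of degree m (MvPolynomial.IsHomogeneous f m) and harmonic, i.e. pderiv 0 (pderiv 0 f) + pderiv 1 (pderiv 1 f) = 0. Then there exist a b : ℝ such that for all x y : ℝ, the evaluation of f at (x, y) equals a * (((x : ℂ) + y * Complex.I)^m).re + b * (((x : ℂ) + y * Complex.I)^m).im. -/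
open MvPolynomial

namespace HarmonicAux2Vars

noncomputable def D (i j : ℕ) : Fin 2 →₀ ℕ := Finsupp.single 0 i + Finsupp.single 1 j

lemma D_apply0 (i j : ℕ) : D i j 0 = i := by
  simp [D, Finsupp.single_apply]

lemma D_apply1 (i j : ℕ) : D i j 1 = j := by
  simp [D, Finsupp.single_apply]

lemma eq_D (d : Fin 2 →₀ ℕ) : d = D (d 0) (d 1) := by
  ext a
  fin_cases a <;> simp [D, Finsupp.single_apply]

lemma D_fst {i j i' j' : ℕ} (h : D i j = D i' j') : i = i' := by
  have := congrArg (fun d => d 0) h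
  simpa [D_apply0] using this

lemma degree_D (i j : ℕ) : (D i j).degree = i + j := by
  rw [Finsupp.degree_apply,
    show (∑ x ∈ (D i j).support, D i j x) = ∑ x : Fin 2, D i j x from
      Finset.sum_subset (Finset.subset_univ _)
        (by intro x _ hx; simpa using Finsupp.notMem_support_iff.mp hx)]
  simp [Fin.sum_univ_two, D_apply0, D_apply1]

lemma D_add0 (i j : ℕ) : D i j + Finsupp.single 0 1 = D (i + 1) j := by
  simp only [D, Finsupp.single_add]
  abel

lemma D_add1 (i j : ℕ) : D i j + Finsupp.single 1 1 = D i (j + 1) := by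
  simp only [D, Finsupp.single_add]
  abel

lemma coeff_pderiv (i : Fin 2) (d : Fin 2 →₀ ℕ) (g : MvPolynomial (Fin 2) ℝ) :
    coeff d (pderiv i g) = ((d i : ℝ) + 1) * coeff (d + Finsupp.single i 1) g := by
  induction g using MvPolynomial.induction_on' with
  | monomial s a =>
    rw [pderiv_monomial, coeff_monomial, coeff_monomial]
    by_cases h2 : s = d + Finsupp.single i 1
    · have h1 : s - Finsupp.single i 1 = d := by
        rw [h2]; exact add_tsub_cancel_right _ _
      rw [if_pos h1, if_pos h2, h2]
      push_cast [Finsupp.add_apply, Finsupp.single_eq_same]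
      ring
    · rw [if_neg h2, mul_zero]
      by_cases h1 : s - Finsupp.single i 1 = d
      · rw [if_pos h1]
        have hsi : s i = 0 := by
          by_contra hsi
          apply h2
          rw [← h1]
          ext a
          by_cases ha : a = i
          · subst ha
            simp only [Finsupp.add_apply, Finsupp.tsub_apply, Finsupp.single_eq_same]
            omega
          · simp [Finsupp.tsub_apply, Finsupp.single_apply, Ne.symm ha, ha]
        simp [hsi]
      · rw [if_neg h1]
  | add p q hp hq =>
    simp only [map_add, coeff_add, hp, hq]
    ring

end HarmonicAux2Vars

namespace HarmonicAux2Vars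

lemma choose_rec (i j m : ℕ) (h : i + (j + 2) = m) :
    (i+2)*(i+1) * m.choose (i+2) = (j+2)*(j+1) * m.choose i := by
  have h1 := Nat.choose_succ_right_eq m i
  have h2 := Nat.choose_succ_right_eq m (i+1)
  rw [show m - i = j + 2 by omega] at h1
  rw [show m - (i+1) = j + 1 by omega] at h2
  calc (i+2)*(i+1)*m.choose (i+2) = (m.choose (i+1+1) * (i+1+1)) * (i+1) := by ring
    _ = (m.choose (i+1) * (j+1)) * (i+1) := by rw [h2]
    _ = (m.choose (i+1) * (i+1)) * (j+1) := by ring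
    _ = (m.choose i * (j+2)) * (j+1) := by rw [h1]
    _ = (j+2)*(j+1)*m.choose i := by ring

end HarmonicAux2Vars

open HarmonicAux2Vars

/-- A harmonic polynomial in two variables, homogeneous of degree `m`, is a real linear
combination of the real and imaginary parts of `(x + iy)^m`. -/
theorem harmonic_homogeneous_two_vars_form (m : ℕ) (f : MvPolynomial (Fin 2) ℝ)
    (hf : f.IsHomogeneous m)
    (hharm : pderiv 0 (pderiv 0 f) + pderiv 1 (pderiv 1 f) = 0) :
    ∃ a b : ℝ, ∀ x y : ℝ,
      MvPolynomial.eval ![x, y] f =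
        a * (((x : ℂ) + y * Complex.I) ^ m).re + b * (((x : ℂ) + y * Complex.I) ^ m).im := by
  classical
  set c : ℕ → ℝ := fun k => coeff (D k (m - k)) f with hc
  set w : ℕ → ℂ := fun k => (m.choose k : ℂ) * Complex.I ^ (m - k) with hw
  -- representation of f as a sum of monomials
  have hrep : f = ∑ k ∈ Finset.range (m+1), monomial (D k (m-k)) (c k) := by
    apply MvPolynomial.ext
    intro d
    rw [MvPolynomial.coeff_sum]
    by_cases hd : d 0 + d 1 = m
    · have hd0 : d 0 ∈ Finset.range (m+1) := Finset.mem_range.mpr (by omega)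
      rw [Finset.sum_eq_single_of_mem (d 0) hd0]
      · have hDd : D (d 0) (m - d 0) = d := by
          rw [show m - d 0 = d 1 by omega]
          exact (eq_D d).symm
        rw [coeff_monomial, if_pos hDd]
        show coeff d f = coeff (D (d 0) (m - d 0)) f
        rw [hDd]
      · intro k hk hne
        rw [coeff_monomial, if_neg]
        intro h
        exact hne (D_fst (h.trans (eq_D d)))
    · have hdeg : d.degree = d 0 + d 1 := by
        conv_lhs => rw [eq_D d, degree_D]
      rw [hf.coeff_eq_zero (by rw [hdeg]; exact hd)]
      symm
      refine Finset.sum_eq_zero ?_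
      intro k hk
      rw [coeff_monomial, if_neg]
      intro h
      apply hd
      rw [← h, D_apply0, D_apply1]
      have hkm : k ≤ m := Nat.lt_succ_iff.mp (Finset.mem_range.mp hk)
      omega
  -- the harmonic recurrence on coefficients
  have hrec : ∀ i j : ℕ, i + (j+2) = m →
      ((i:ℝ)+2)*((i:ℝ)+1) * c (i+1+1) + ((j:ℝ)+2)*((j:ℝ)+1) * c i = 0 := by
    intro i j hij
    have h0 := congrArg (coeff (D i j)) hharm
    rw [coeff_add, coeff_pderiv, coeff_pderiv, coeff_pderiv, coeff_pderiv, coeff_zero,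
        D_add0, D_add0, D_add1, D_add1, D_apply0, D_apply1, D_apply0, D_apply1] at h0
    have e1 : coeff (D (i+1+1) j) f = c (i+1+1) := by
      rw [hc]
      show _ = coeff (D (i+1+1) (m - (i+1+1))) f
      rw [show m - (i+1+1) = j by omega]
    have e2 : coeff (D i (j+1+1)) f = c i := by
      rw [hc]
      show _ = coeff (D i (m - i)) f
      rw [show m - i = j+1+1 by omega]
    rw [e1, e2] at h0
    push_cast at h0 ⊢
    linear_combination h0
  -- same recurrence for w
  have hwrec : ∀ i j : ℕ, i + (j+2) = m →
      ((((i:ℝ)+2)*((i:ℝ)+1) : ℝ) : ℂ) * w (i+1+1) + ((((j:ℝ)+2)*((j:ℝ)+1) : ℝ) : ℂ) * w i = 0 := by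
    intro i j hij
    have key : (((i+2)*(i+1) * m.choose (i+2) : ℕ) : ℂ) = (((j+2)*(j+1) * m.choose i : ℕ) : ℂ) := by
      exact_mod_cast congrArg (fun n : ℕ => (n : ℂ)) (choose_rec i j m hij)
    push_cast at key
    rw [hw]
    show (((((i:ℝ)+2)*((i:ℝ)+1) : ℝ) : ℂ)) * ((m.choose (i+1+1) : ℂ) * Complex.I ^ (m - (i+1+1)))
        + (((((j:ℝ)+2)*((j:ℝ)+1) : ℝ) : ℂ)) * ((m.choose i : ℂ) * Complex.I ^ (m - i)) = 0
    rw [show m - (i+1+1) = j by omega, show m - i = j + 2 by omega, pow_add, Complex.I_sq]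
    push_cast
    rw [show i+1+1 = i+2 from rfl]
    linear_combination Complex.I ^ j * key
  set a : ℝ := c m with ha
  set b : ℝ := if m = 0 then 0 else c (m-1) / m with hb
  -- closed form for the coefficients
  have main : ∀ j : ℕ, j ≤ m → c (m - j) = a * (w (m-j)).re + b * (w (m-j)).im := by
    intro j
    induction j using Nat.strong_induction_on with
    | _ j ih =>
      intro hj
      match j, hj with
      | 0, hj =>
        have hwm : w (m - 0) = 1 := by
          rw [hw]
          show (m.choose (m-0) : ℂ) * Complex.I ^ (m - (m - 0)) = 1
          rw [Nat.sub_zero, Nat.choose_self, Nat.sub_self, pow_zero]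
          norm_num
        rw [hwm, Nat.sub_zero]
        simp [ha]
      | 1, hj =>
        have hm1 : m ≠ 0 := by omega
        have hwm : w (m - 1) = (m : ℝ) * Complex.I := by
          rw [hw]
          show (m.choose (m-1) : ℂ) * Complex.I ^ (m - (m - 1)) = (m : ℝ) * Complex.I
          rw [show m - (m - 1) = 1 by omega, Nat.choose_symm (by omega : 1 ≤ m),
            Nat.choose_one_right, pow_one]
          norm_num
        rw [hwm]
        rw [Complex.re_ofReal_mul, Complex.im_ofReal_mul, Complex.I_re, Complex.I_im]
        rw [hb, if_neg hm1]
        have : (m : ℝ) ≠ 0 := Nat.cast_ne_zero.mpr hm1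
        field_simp
        ring
      | (j+2), hj =>
        set i : ℕ := m - (j+2) with hi
        have hij : i + (j+2) = m := by omega
        have hi2 : i + 1 + 1 = m - j := by omega
        have h1 := hrec i j hij
        have hre := congrArg Complex.re (hwrec i j hij)
        have him := congrArg Complex.im (hwrec i j hij)
        simp only [Complex.add_re, Complex.re_ofReal_mul, Complex.zero_re] at hre
        simp only [Complex.add_im, Complex.im_ofReal_mul, Complex.zero_im] at him
        have hc2 : c (i+1+1) = a * (w (i+1+1)).re + b * (w (i+1+1)).im := by
          rw [hi2]
          exact ih j (by omega) (by omega)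
        have hK1 : ((j:ℝ)+2)*((j:ℝ)+1) ≠ 0 := by positivity
        apply mul_left_cancel₀ hK1
        linear_combination h1 - (((i:ℝ)+2)*((i:ℝ)+1)) * hc2 - a * hre - b * him
  refine ⟨a, b, ?_⟩
  intro x y
  have hL : MvPolynomial.eval ![x,y] f = ∑ k ∈ Finset.range (m+1), c k * (x^k * y^(m-k)) := by
    conv_lhs => rw [hrep]
    rw [map_sum]
    refine Finset.sum_congr rfl ?_
    intro k hk
    rw [eval_monomial, Finsupp.prod_fintype _ _ (fun i => pow_zero _), Fin.prod_univ_two,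
      D_apply0, D_apply1]
    simp
  have hR : ((x:ℂ) + y*Complex.I)^m
      = ∑ k ∈ Finset.range (m+1), ((x^k * y^(m-k) : ℝ) : ℂ) * w k := by
    rw [add_pow]
    refine Finset.sum_congr rfl ?_
    intro k hk
    rw [hw]
    show (x:ℂ)^k * ((y:ℂ) * Complex.I)^(m-k) * (m.choose k : ℂ)
        = ((x^k * y^(m-k) : ℝ) : ℂ) * ((m.choose k : ℂ) * Complex.I ^ (m-k))
    rw [mul_pow]
    push_cast
    ring
  rw [hL, hR, Complex.re_sum, Complex.im_sum, Finset.mul_sum, Finset.mul_sum,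
    ← Finset.sum_add_distrib]
  refine Finset.sum_congr rfl ?_
  intro k hk
  have hkm : k ≤ m := Nat.lt_succ_iff.mp (Finset.mem_range.mp hk)
  have hmain := main (m - k) (by omega)
  rw [show m - (m - k) = k by omega] at hmain
  rw [Complex.re_ofReal_mul, Complex.im_ofReal_mul, hmain]
  ring
end

section
/- Let m ≥ 1 and let f ∈ MvPolynomial (Fin 2) ℝ be homogeneous of degree m (MvPolynomial.IsHomogeneous f m) and harmonic, i.e. pderiv 0 (pderiv 0 f) + pderiv 1 (pderiv 1 f) = 0. Set θ = 2π/m. Then f is invariant under the rotation by angle θ: for all x y : ℝ, evaluating f at (cos θ * x − sin θ * y, sin θ * x + cos θ * y) gives the same value as evaluating f at (x, y). -/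
open MvPolynomial Real

namespace HarmRotAux

lemma coeff_pderiv {σ : Type*} [DecidableEq σ] {R : Type*} [CommRing R]
    (i : σ) (f : MvPolynomial σ R) (s : σ →₀ ℕ) :
    coeff s (pderiv i f) = (s i + 1 : ℕ) * coeff (s + Finsupp.single i 1) f := by
  induction f using MvPolynomial.induction_on' with
  | monomial t a =>
      rw [pderiv_monomial, coeff_monomial, coeff_monomial]
      by_cases h : t = s + Finsupp.single i 1
      · subst h
        have h1 : s + Finsupp.single i 1 - Finsupp.single i 1 = s :=
          add_tsub_cancel_right s (Finsupp.single i 1)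
        have h2 : ((s + Finsupp.single i 1 : σ →₀ ℕ)) i = s i + 1 := by
          rw [Finsupp.add_apply, Finsupp.single_eq_same]
        rw [if_pos h1, if_pos rfl, h2]
        push_cast; ring
      · rw [if_neg h, mul_zero]
        by_cases h2 : t - Finsupp.single i 1 = s
        · rw [if_pos h2]
          by_cases h3 : t i = 0
          · simp [h3]
          · exfalso
            apply h
            have hle : Finsupp.single i 1 ≤ t := by
              rw [Finsupp.single_le_iff]
              omega
            rw [← h2, tsub_add_cancel_of_le hle]
        · rw [if_neg h2]
  | add p q hp hq =>
      simp only [map_add, coeff_add, hp, hq]; ring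

lemma pderiv_comm {σ : Type*} [DecidableEq σ] {R : Type*} [CommRing R]
    (i j : σ) (f : MvPolynomial σ R) :
    pderiv i (pderiv j f) = pderiv j (pderiv i f) := by
  ext s
  rw [coeff_pderiv, coeff_pderiv, coeff_pderiv, coeff_pderiv]
  by_cases h : i = j
  · subst h; ring_nf
  · have h1 : ((s + Finsupp.single i 1 : σ →₀ ℕ)) j = s j := by
      rw [Finsupp.add_apply, Finsupp.single_apply, if_neg h, add_zero]
    have h2 : ((s + Finsupp.single j 1 : σ →₀ ℕ)) i = s i := by
      rw [Finsupp.add_apply, Finsupp.single_apply, if_neg (Ne.symm h), add_zero]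
    rw [h1, h2, add_right_comm s (Finsupp.single i 1) (Finsupp.single j 1)]
    ring

lemma pderiv_aeval2 {R S : Type*} [CommRing R] [CommRing S] [Algebra R S]
    (p : Fin 2 → MvPolynomial (Fin 2) S)
    (j : Fin 2) (f : MvPolynomial (Fin 2) R) :
    pderiv j (aeval p f) =
      aeval p (pderiv 0 f) * pderiv j (p 0) + aeval p (pderiv 1 f) * pderiv j (p 1) := by
  induction f using MvPolynomial.induction_on with
  | C a => simp
  | add f g hf hg => simp only [map_add, hf, hg]; ring
  | mul_X f i hf =>
      have : pderiv j (aeval p (f * X i)) =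
          pderiv j (aeval p f) * p i + aeval p f * pderiv j (p i) := by
        simp only [map_mul, aeval_X, pderiv_mul]
      rw [this, hf]
      fin_cases i <;>
        simp [pderiv_mul, pderiv_X_self,
          pderiv_X_of_ne (show (0:Fin 2) ≠ 1 by decide),
          pderiv_X_of_ne (show (1:Fin 2) ≠ 0 by decide)] <;> ring

end HarmRotAux
/-- A harmonic polynomial in two variables, homogeneous of degree `m ≥ 1`, is invariant
under the Euclidean rotation by the angle `2π/m`. -/
theorem harmonic_homogeneous_rotation_invariant (m : ℕ) (hm : 1 ≤ m)
    (f : MvPolynomial (Fin 2) ℝ)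
    (hf : f.IsHomogeneous m)
    (hharm : pderiv 0 (pderiv 0 f) + pderiv 1 (pderiv 1 f) = 0) :
    ∀ x y : ℝ,
      MvPolynomial.eval
          ![Real.cos (2 * π / m) * x - Real.sin (2 * π / m) * y,
            Real.sin (2 * π / m) * x + Real.cos (2 * π / m) * y] f
        = MvPolynomial.eval ![x, y] f := by
  intro x y
  have hm0 : (m : ℝ) ≠ 0 := Nat.cast_ne_zero.mpr (by omega)
  have hmC : (m : ℂ) ≠ 0 := Nat.cast_ne_zero.mpr (by omega)
  set θ : ℝ := 2 * π / m with hθ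
  -- the complexified substituted polynomial g(z, w) = f((z+w)/2, i(w-z)/2)
  set q : Fin 2 → MvPolynomial (Fin 2) ℂ :=
    ![C (1/2 : ℂ) * (X 0 + X 1), C (Complex.I/2) * (X 1 - X 0)] with hq
  set g : MvPolynomial (Fin 2) ℂ := aeval q f with hgdef
  -- derivatives of the substitution
  have e00 : pderiv 0 (q 0) = C (1/2 : ℂ) := by
    simp [hq, pderiv_C_mul, pderiv_X_self, pderiv_X_of_ne (show (1:Fin 2) ≠ 0 by decide)]
  have e10 : pderiv 1 (q 0) = C (1/2 : ℂ) := by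
    simp [hq, pderiv_C_mul, pderiv_X_self, pderiv_X_of_ne (show (0:Fin 2) ≠ 1 by decide)]
  have e01 : pderiv 0 (q 1) = -C (Complex.I/2) := by
    simp [hq, pderiv_C_mul, pderiv_X_self, pderiv_X_of_ne (show (1:Fin 2) ≠ 0 by decide)]
  have e11 : pderiv 1 (q 1) = C (Complex.I/2) := by
    simp [hq, pderiv_C_mul, pderiv_X_self, pderiv_X_of_ne (show (0:Fin 2) ≠ 1 by decide)]
  -- g satisfies ∂₀∂₁ g = 0
  have key : aeval q (pderiv 0 (pderiv 0 f)) + aeval q (pderiv 1 (pderiv 1 f)) = 0 := by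
    rw [← map_add, hharm, map_zero]
  have hcd : (C (Complex.I/2) : MvPolynomial (Fin 2) ℂ)^2 = - (C (1/2 : ℂ))^2 := by
    rw [← map_pow, ← map_pow, ← map_neg]
    congr 1
    rw [div_pow, Complex.I_sq]
    norm_num
  have hg01 : pderiv 0 (pderiv 1 g) = 0 := by
    have hA : pderiv 1 g =
        aeval q (pderiv 0 f) * C (1/2 : ℂ) + aeval q (pderiv 1 f) * C (Complex.I/2) := by
      rw [hgdef, HarmRotAux.pderiv_aeval2, e10, e11]
    rw [hA, map_add, pderiv_mul, pderiv_mul]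
    simp only [pderiv_C, mul_zero, add_zero]
    rw [HarmRotAux.pderiv_aeval2 q 0 (pderiv 0 f), HarmRotAux.pderiv_aeval2 q 0 (pderiv 1 f),
      e00, e01, HarmRotAux.pderiv_comm 1 0 f]
    linear_combination (C (1/2 : ℂ) : MvPolynomial (Fin 2) ℂ)^2 * key
      - aeval q (pderiv 1 (pderiv 1 f)) * hcd
  -- g is homogeneous of degree m
  have hgm : g.IsHomogeneous m := by
    have hq0 : (q 0).IsHomogeneous 1 := by
      rw [hq]
      simpa using ((isHomogeneous_X ℂ (0 : Fin 2)).add (isHomogeneous_X ℂ 1)).C_mul (1/2 : ℂ)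
    have hq1 : (q 1).IsHomogeneous 1 := by
      rw [hq]
      simpa using ((isHomogeneous_X ℂ (1 : Fin 2)).sub (isHomogeneous_X ℂ 0)).C_mul (Complex.I/2)
    have := hf.aeval q (fun i => by fin_cases i <;> assumption)
    simpa using this
  -- the support of g consists of (m,0) and (0,m)
  have hzero : ∀ t : Fin 2 →₀ ℕ, 1 ≤ t 0 → 1 ≤ t 1 → coeff t g = 0 := by
    intro t h0 h1
    have hle0 : Finsupp.single (0 : Fin 2) 1 ≤ t := Finsupp.single_le_iff.mpr h0
    have h1' : 1 ≤ ((t - Finsupp.single (0 : Fin 2) 1 : Fin 2 →₀ ℕ)) 1 := by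
      rw [Finsupp.tsub_apply, Finsupp.single_apply]
      simp only [if_neg (show ¬(0 : Fin 2) = 1 by decide)]
      omega
    have hle1 : Finsupp.single (1 : Fin 2) 1 ≤ t - Finsupp.single (0 : Fin 2) 1 :=
      Finsupp.single_le_iff.mpr h1'
    set s : Fin 2 →₀ ℕ := t - Finsupp.single 0 1 - Finsupp.single 1 1 with hs
    have hst : s + Finsupp.single (0 : Fin 2) 1 + Finsupp.single (1 : Fin 2) 1 = t := by
      rw [add_right_comm, hs, tsub_add_cancel_of_le hle1, tsub_add_cancel_of_le hle0]
    have hc := congrArg (coeff s) hg01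
    rw [HarmRotAux.coeff_pderiv, HarmRotAux.coeff_pderiv, hst, coeff_zero] at hc
    have hne1 : ((s 0 + 1 : ℕ) : ℂ) ≠ 0 := Nat.cast_ne_zero.mpr (Nat.succ_ne_zero _)
    have hne2 : (((s + Finsupp.single (0:Fin 2) 1 : Fin 2 →₀ ℕ) 1 + 1 : ℕ) : ℂ) ≠ 0 :=
      Nat.cast_ne_zero.mpr (Nat.succ_ne_zero _)
    rcases mul_eq_zero.mp hc with h | h
    · exact absurd h hne1
    rcases mul_eq_zero.mp h with h | h
    · exact absurd h hne2
    exact h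
  have hsupp : ∀ t ∈ g.support, t = Finsupp.single (0 : Fin 2) m ∨ t = Finsupp.single 1 m := by
    intro t ht
    have hct : coeff t g ≠ 0 := mem_support_iff.mp ht
    have hdeg : t 0 + t 1 = m := by
      have hd : t.degree = m := by
        by_contra hne
        exact hct (hgm.coeff_eq_zero hne)
      have hsum : t.degree = t 0 + t 1 := by
        rw [Finsupp.degree_apply,
          Finset.sum_subset (Finset.subset_univ t.support)
            (fun i _ hi => Finsupp.notMem_support_iff.mp hi),
          Fin.sum_univ_two]
      omega
    by_cases h0 : t 0 = 0
    · right
      ext j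
      fin_cases j <;> simp [Finsupp.single_apply, h0] <;> omega
    · by_cases h1 : t 1 = 0
      · left
        ext j
        fin_cases j <;> simp [Finsupp.single_apply, h1] <;> omega
      · exact absurd (hzero t (by omega) (by omega)) hct
  -- complex rotation numbers
  set ω : ℂ := Complex.exp ((θ : ℂ) * Complex.I) with hω
  set ω' : ℂ := Complex.exp (-(θ : ℂ) * Complex.I) with hω'
  have hωm : ω ^ m = 1 := by
    rw [hω, ← Complex.exp_nat_mul]
    have : (m : ℂ) * ((θ : ℂ) * Complex.I) = 2 * π * Complex.I := by
      rw [hθ]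
      push_cast
      field_simp
    rw [this, Complex.exp_two_pi_mul_I]

  have hω'm : ω' ^ m = 1 := by
    rw [hω', ← Complex.exp_nat_mul]
    have : (m : ℂ) * (-(θ : ℂ) * Complex.I) = -(2 * π * Complex.I) := by
      rw [hθ]
      push_cast
      field_simp
    rw [this, Complex.exp_neg, Complex.exp_two_pi_mul_I, inv_one]
  -- evaluation of g versus evaluation of f
  have heval : ∀ a b : ℝ,
      eval ![(a : ℂ) + b * Complex.I, (a : ℂ) - b * Complex.I] g
        = ((eval ![a, b] f : ℝ) : ℂ) := by
    intro a b
    set v : Fin 2 → ℂ := ![(a : ℂ) + b * Complex.I, (a : ℂ) - b * Complex.I] with hv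
    have hp0 : eval v (q 0) = (a : ℂ) := by
      rw [hq]
      simp [hv]
      ring
    have hp1 : eval v (q 1) = (b : ℂ) := by
      rw [hq]
      simp [hv]
      linear_combination (-(b : ℂ)) * Complex.I_mul_I
    have hcomp : (MvPolynomial.eval v).comp (algebraMap ℝ (MvPolynomial (Fin 2) ℂ))
        = algebraMap ℝ ℂ := by
      ext r
      rw [RingHom.comp_apply, MvPolynomial.algebraMap_apply, eval_C]
    have h1 : eval v g = eval₂ (algebraMap ℝ ℂ) (fun i => eval v (q i)) f := by
      rw [hgdef, aeval_def, eval₂_comp_left (MvPolynomial.eval v), hcomp]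
      rfl
    have h2 : ((eval ![a, b] f : ℝ) : ℂ)
        = eval₂ (algebraMap ℝ ℂ) (fun i => ((![a, b] i : ℝ) : ℂ)) f := by
      have := eval₂_comp_left (algebraMap ℝ ℂ) (RingHom.id ℝ) (![a, b]) f
      rw [show eval₂ (RingHom.id ℝ) ![a, b] f = eval ![a, b] f from rfl] at this
      simp [RingHom.comp_id, Function.comp, Complex.coe_algebraMap] at this
      exact this
    rw [h1, h2]
    congr 1
    funext i
    fin_cases i
    · simpa using hp0
    · simpa using hp1
  -- invariance of g under the diagonal rotation
  have hinv : ∀ z w : ℂ, eval ![ω * z, ω' * w] g = eval ![z, w] g := by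
    intro z w
    rw [eval_eq, eval_eq]
    apply Finset.sum_congr rfl
    intro t ht
    rcases hsupp t ht with h | h <;> subst h <;>
      simp [Fin.prod_univ_two, Finsupp.single_apply, mul_pow, hωm, hω'm]
  -- the rotation acts as multiplication by ω, ω' on z, w
  set x' : ℝ := Real.cos θ * x - Real.sin θ * y with hx'
  set y' : ℝ := Real.sin θ * x + Real.cos θ * y with hy'
  have hrot1 : (x' : ℂ) + (y' : ℂ) * Complex.I = ω * ((x : ℂ) + y * Complex.I) := by
    rw [hω, Complex.exp_mul_I, hx', hy']
    push_cast
    linear_combination (-(Complex.sin (θ:ℂ)) * (y:ℂ)) * Complex.I_mul_I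
  have hrot2 : (x' : ℂ) - (y' : ℂ) * Complex.I = ω' * ((x : ℂ) - y * Complex.I) := by
    rw [hω', Complex.exp_mul_I, Complex.cos_neg, Complex.sin_neg, hx', hy']
    push_cast
    linear_combination (-(Complex.sin (θ:ℂ)) * (y:ℂ)) * Complex.I_mul_I
  -- put everything together
  apply Complex.ofReal_injective
  calc ((eval ![x', y'] f : ℝ) : ℂ)
      = eval ![(x' : ℂ) + y' * Complex.I, (x' : ℂ) - y' * Complex.I] g := (heval x' y').symm
    _ = eval ![ω * ((x : ℂ) + y * Complex.I), ω' * ((x : ℂ) - y * Complex.I)] g := by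
        rw [← hrot1, ← hrot2]
    _ = eval ![(x : ℂ) + y * Complex.I, (x : ℂ) - y * Complex.I] g := hinv _ _
    _ = ((eval ![x, y] f : ℝ) : ℂ) := heval x y
end

section
/- Let n ≥ 3 and m ≥ 2, and let f ∈ MvPolynomial (Fin n) ℝ be homogeneous of degree m (MvPolynomial.IsHomogeneous f m). Let F : EuclideanSpace ℝ (Fin n) → ℝ denote the evaluation of f. Suppose that for every pair of vectors u v ∈ EuclideanSpace ℝ (Fin n) with ‖u‖ = 1, ‖v‖ = 1 and ⟪u, v⟫ = 0, the function g : ℝ → ℝ → ℝ, g s t = F (s • u + t • v), has vanishing two-dimensional Laplacian: for all s t : ℝ, deriv (fun s' => deriv (fun s'' => g s'' t) s') s + deriv (fun t' => deriv (fun t'' => g s t'') t') t = 0. Then f = 0. -/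
open MvPolynomial
open scoped RealInnerProductSpace

open Finset

section AuxPlaneHarmonic

variable {n : ℕ}

noncomputable def Dv (a : Fin n → ℝ) (g : MvPolynomial (Fin n) ℝ) : MvPolynomial (Fin n) ℝ :=
  ∑ i, C (a i) * pderiv i g

noncomputable def lap (g : MvPolynomial (Fin n) ℝ) : MvPolynomial (Fin n) ℝ :=
  ∑ i, pderiv i (pderiv i g)

noncomputable def rsq (n : ℕ) : MvPolynomial (Fin n) ℝ := ∑ i, X i * X i

lemma Dv_add (a : Fin n → ℝ) (p q : MvPolynomial (Fin n) ℝ) :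
    Dv a (p + q) = Dv a p + Dv a q := by
  simp [Dv, map_add, mul_add, Finset.sum_add_distrib]

lemma Dv_C (a : Fin n → ℝ) (r : ℝ) : Dv a (C r) = 0 := by
  simp [Dv, pderiv_C]

lemma Dv_mul_X (a : Fin n → ℝ) (p : MvPolynomial (Fin n) ℝ) (i : Fin n) :
    Dv a (p * X i) = Dv a p * X i + C (a i) * p := by
  have h : ∀ j : Fin n, C (a j) * pderiv j (p * X i)
      = C (a j) * pderiv j p * X i + (if i = j then C (a i) * p else 0) := by
    intro j
    rw [pderiv_mul, pderiv_X]
    rcases eq_or_ne i j with h | h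
    · subst h; simp [mul_add, mul_comm, mul_assoc, mul_left_comm]
    · rw [Pi.single_eq_of_ne h]
      simp [h, mul_add, mul_assoc]
  simp only [Dv, h, Finset.sum_add_distrib, Finset.sum_ite_eq, mem_univ, if_true,
    Finset.sum_mul]

lemma degree_sub_single {d : Fin n →₀ ℕ} {i : Fin n} (h : d i ≠ 0) {k : ℕ}
    (hd : d.degree = k) : (d - Finsupp.single i 1).degree = k - 1 := by
  have hle : Finsupp.single i 1 ≤ d :=
    Finsupp.single_le_iff.mpr (Nat.one_le_iff_ne_zero.mpr h)
  have hadd : (d - Finsupp.single i 1) + Finsupp.single i 1 = d := tsub_add_cancel_of_le hle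
  have hdeg : ∀ e e' : Fin n →₀ ℕ, (e + e').degree = e.degree + e'.degree := by
    intro e e'
    simp only [Finsupp.degree_eq_weight_one, map_add]
  have h1 : (Finsupp.single i 1 : Fin n →₀ ℕ).degree = 1 := by
    simp [Finsupp.degree_eq_weight_one, Finsupp.weight_apply, Finsupp.sum_single_index]
  have := hdeg (d - Finsupp.single i 1) (Finsupp.single i 1)
  rw [hadd, hd, h1] at this
  omega

lemma isHomogeneous_pderiv {k : ℕ} {g : MvPolynomial (Fin n) ℝ} (hg : g.IsHomogeneous k)
    (i : Fin n) : (pderiv i g).IsHomogeneous (k - 1) := by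
  conv_lhs => rw [g.as_sum]
  rw [map_sum]
  apply IsHomogeneous.sum
  intro d hd
  rw [pderiv_monomial]
  rcases eq_or_ne (d i) 0 with h0 | h0
  · rw [h0]; simp only [Nat.cast_zero, mul_zero, map_zero]
    exact isHomogeneous_zero _ _ _
  · apply isHomogeneous_monomial
    have hdk : d.degree = k := by
      rw [Finsupp.degree_eq_weight_one]
      exact hg (MvPolynomial.mem_support_iff.mp hd)
    exact degree_sub_single h0 hdk

lemma euler {k : ℕ} {g : MvPolynomial (Fin n) ℝ} (hg : g.IsHomogeneous k) :
    ∑ i, X i * pderiv i g = C (k : ℝ) * g := by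
  conv_lhs => rw [g.as_sum]
  conv_rhs => rw [g.as_sum]
  rw [Finset.mul_sum]
  have swap : ∑ i : Fin n, X i * pderiv i (∑ d ∈ g.support, monomial d (coeff d g))
      = ∑ d ∈ g.support, ∑ i : Fin n, X i * pderiv i (monomial d (coeff d g)) := by
    simp only [map_sum, Finset.mul_sum]
    exact Finset.sum_comm
  rw [swap]
  apply Finset.sum_congr rfl
  intro d hd
  have hdk : d.degree = k := by
    rw [Finsupp.degree_eq_weight_one]
    exact hg (MvPolynomial.mem_support_iff.mp hd)
  have step : ∀ i : Fin n, X i * pderiv i (monomial d (coeff d g))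
      = monomial d (coeff d g * (d i : ℝ)) := by
    intro i
    rw [pderiv_monomial]
    rcases eq_or_ne (d i) 0 with h0 | h0
    · rw [h0]; simp
    · have hle : Finsupp.single i 1 ≤ d :=
        Finsupp.single_le_iff.mpr (Nat.one_le_iff_ne_zero.mpr h0)
      rw [X, monomial_mul, one_mul, add_tsub_cancel_of_le hle]
  rw [Finset.sum_congr rfl fun i _ => step i]
  rw [← map_sum, ← Finset.mul_sum, C_mul_monomial]
  congr 1
  · rw [mul_comm]
    congr 1
    rw [← hdk]
    rw [← Nat.cast_sum]
    congr 1
    unfold Finsupp.degree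
    exact (Finset.sum_subset (Finset.subset_univ _)
      (fun x _ hx => Finsupp.notMem_support_iff.mp hx)).symm

lemma pderiv_rsq (i : Fin n) : pderiv i (rsq n) = X i + X i := by
  have h : ∀ j : Fin n, pderiv i (X j * X j)
      = (if j = i then X j + X j else 0 : MvPolynomial (Fin n) ℝ) := by
    intro j
    rw [pderiv_mul, pderiv_X, Pi.single_apply]
    rcases eq_or_ne j i with h | h
    · simp [h]
    · simp [h]
  simp only [rsq, map_sum, h, Finset.sum_ite_eq', mem_univ, if_true]

lemma lap_C_mul (r : ℝ) (g : MvPolynomial (Fin n) ℝ) : lap (C r * g) = C r * lap g := by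
  simp [lap, pderiv_C_mul, Finset.mul_sum]

lemma lap_rsq_mul {k : ℕ} {g : MvPolynomial (Fin n) ℝ} (hg : g.IsHomogeneous k) :
    lap (rsq n * g) = C ((2 * n + 4 * k : ℝ)) * g + rsq n * lap g := by
  have h1 : ∀ i : Fin n, pderiv i (pderiv i (rsq n * g))
      = (g + g) + ((X i * pderiv i g + X i * pderiv i g)
          + (X i * pderiv i g + X i * pderiv i g))
        + rsq n * pderiv i (pderiv i g) := by
    intro i
    rw [pderiv_mul, pderiv_rsq, map_add, pderiv_mul, pderiv_mul, pderiv_rsq, map_add,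
      pderiv_X_self]
    ring
  unfold lap
  rw [Finset.sum_congr rfl fun i _ => h1 i, Finset.sum_add_distrib, Finset.sum_add_distrib,
    Finset.sum_add_distrib, Finset.sum_add_distrib, Finset.sum_add_distrib, euler hg,
    ← Finset.mul_sum, Finset.sum_const, Finset.card_univ, Fintype.card_fin, nsmul_eq_mul]
  have hn : ((n : MvPolynomial (Fin n) ℝ)) = C (n : ℝ) := by
    simp [map_natCast]
  rw [hn]
  have hsplit : (C (2 * (n:ℝ) + 4 * (k:ℝ)) : MvPolynomial (Fin n) ℝ)
      = C (n:ℝ) + C (n:ℝ) + (C (k:ℝ) + C (k:ℝ) + (C (k:ℝ) + C (k:ℝ))) := by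
    rw [← map_add, ← map_add, ← map_add, ← map_add]
    congr 1
    ring
  rw [hsplit]
  ring

lemma homog_zero_pderiv {g : MvPolynomial (Fin n) ℝ} (hg : g.IsHomogeneous 0) (i : Fin n) :
    pderiv i g = 0 := by
  have hgC : g = C (coeff 0 g) := by
    ext d
    rcases eq_or_ne d 0 with rfl | hd
    · simp
    · rw [hg.coeff_eq_zero (by rw [Ne, Finsupp.degree_eq_zero_iff]; exact hd)]
      simp [coeff_C, Ne.symm hd]
  rw [hgC, pderiv_C]

lemma vanish : ∀ d : ℕ, ∀ h : MvPolynomial (Fin n) ℝ, h.IsHomogeneous d →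
    ∀ c : ℝ, c < 0 → rsq n * lap h = C c * h → h = 0 := by
  intro d
  induction d using Nat.strong_induction_on with
  | _ d ih =>
    intro h hh c hc heq
    have hlap : lap h = 0 := by
      by_cases hd2 : 2 ≤ d
      · have hg : (lap h).IsHomogeneous (d - 2) := by
          apply IsHomogeneous.sum
          intro i _
          have h2 := isHomogeneous_pderiv (isHomogeneous_pderiv hh i) i
          have : d - 1 - 1 = d - 2 := by omega
          rwa [this] at h2
        have h2 : lap (rsq n * lap h) = lap (C c * h) := by rw [heq]
        rw [lap_rsq_mul hg, lap_C_mul] at h2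
        have h3 : rsq n * lap (lap h) = C (c - (2 * n + 4 * ((d - 2 : ℕ) : ℝ))) * lap h := by
          rw [map_sub, sub_mul]
          linear_combination h2
        have hc' : c - (2 * n + 4 * ((d - 2 : ℕ) : ℝ)) < 0 := by
          have h2n : (0:ℝ) ≤ 2 * n + 4 * ((d - 2 : ℕ) : ℝ) := by positivity
          linarith
        exact ih (d - 2) (by omega) (lap h) hg _ hc' h3
      · have hz : ∀ i : Fin n, pderiv i (pderiv i h) = 0 := by
          intro i
          have h1 : (pderiv i h).IsHomogeneous 0 := by
            have h2 := isHomogeneous_pderiv hh i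
            have : d - 1 = 0 := by omega
            rwa [this] at h2
          exact homog_zero_pderiv h1 i
        simp [lap, hz]
    rw [hlap, mul_zero] at heq
    rcases mul_eq_zero.mp heq.symm with h1 | h1
    · have : c = 0 := by simpa using h1
      exact absurd this hc.ne
    · exact h1

lemma eval_psi (c d : Fin n → ℝ) (s : ℝ) (g : MvPolynomial (Fin n) ℝ) :
    Polynomial.eval s (eval₂ Polynomial.C
      (fun i => Polynomial.C (c i) + Polynomial.C (d i) * Polynomial.X) g)
      = eval (fun i => c i + d i * s) g := by
  induction g using MvPolynomial.induction_on with
  | C a => simp [eval₂_C]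
  | add p q hp hq => simp [eval₂_add, hp, hq]
  | mul_X p i hp => simp [eval₂_mul, eval₂_X, hp]

lemma derivative_psi (c d : Fin n → ℝ) (g : MvPolynomial (Fin n) ℝ) :
    Polynomial.derivative (eval₂ Polynomial.C
      (fun i => Polynomial.C (c i) + Polynomial.C (d i) * Polynomial.X) g)
      = eval₂ Polynomial.C
        (fun i => Polynomial.C (c i) + Polynomial.C (d i) * Polynomial.X) (Dv d g) := by
  induction g using MvPolynomial.induction_on with
  | C a => simp [eval₂_C, Dv_C]
  | add p q hp hq => simp [eval₂_add, Dv_add, hp, hq]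
  | mul_X p i hp =>
    rw [eval₂_mul, eval₂_X, Polynomial.derivative_mul, hp, Dv_mul_X, eval₂_add, eval₂_mul,
      eval₂_X, eval₂_mul, eval₂_C]
    simp only [Polynomial.derivative_add, Polynomial.derivative_C, Polynomial.derivative_mul,
      Polynomial.derivative_X, zero_add, mul_one, mul_zero, add_zero, zero_mul]
    ring

lemma deriv_eval_line (c d : Fin n → ℝ) (g : MvPolynomial (Fin n) ℝ) (s : ℝ) :
    deriv (fun y => eval (fun i => c i + d i * y) g) s
      = eval (fun i => c i + d i * s) (Dv d g) := by
  have h : (fun y => eval (fun i => c i + d i * y) g)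
      = fun y => Polynomial.eval y (eval₂ Polynomial.C
          (fun i => Polynomial.C (c i) + Polynomial.C (d i) * Polynomial.X) g) := by
    funext y; rw [eval_psi]
  rw [h, Polynomial.deriv, derivative_psi, eval_psi]

lemma deriv2_eval_line (c d : Fin n → ℝ) (g : MvPolynomial (Fin n) ℝ) (s : ℝ) :
    deriv (fun s' => deriv (fun y => eval (fun i => c i + d i * y) g) s') s
      = eval (fun i => c i + d i * s) (Dv d (Dv d g)) := by
  have h : (fun s' => deriv (fun y => eval (fun i => c i + d i * y) g) s')
      = fun s' => eval (fun i => c i + d i * s') (Dv d g) :=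
    funext fun s' => deriv_eval_line c d g s'
  rw [h, deriv_eval_line]

lemma eval_Dv (a : Fin n → ℝ) (g : MvPolynomial (Fin n) ℝ) (x : Fin n → ℝ) :
    eval x (Dv a g) = ∑ i, a i * eval x (pderiv i g) := by
  simp [Dv]

lemma euler_eval {k : ℕ} {g : MvPolynomial (Fin n) ℝ} (hg : g.IsHomogeneous k)
    (x : Fin n → ℝ) : eval x (Dv x g) = (k : ℝ) * eval x g := by
  have h := congrArg (eval x) (euler hg)
  simpa [eval_Dv] using h

lemma Dv_smul (r : ℝ) (a : Fin n → ℝ) (g : MvPolynomial (Fin n) ℝ) :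
    Dv (fun i => r * a i) g = C r * Dv a g := by
  simp [Dv, map_mul, Finset.mul_sum, mul_assoc]

lemma Dv_C_mul (a : Fin n → ℝ) (r : ℝ) (g : MvPolynomial (Fin n) ℝ) :
    Dv a (C r * g) = C r * Dv a g := by
  simp [Dv, pderiv_C_mul, Finset.mul_sum, mul_left_comm]

lemma Dv_isHomogeneous {k : ℕ} {g : MvPolynomial (Fin n) ℝ} (hg : g.IsHomogeneous k)
    (a : Fin n → ℝ) : (Dv a g).IsHomogeneous (k - 1) :=
  IsHomogeneous.sum _ _ _ fun i _ => (isHomogeneous_pderiv hg i).C_mul _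

lemma eval_DvDv (a : Fin n → ℝ) (g : MvPolynomial (Fin n) ℝ) (x : Fin n → ℝ) :
    eval x (Dv a (Dv a g)) = ∑ i, ∑ j, a i * a j * eval x (pderiv i (pderiv j g)) := by
  simp [Dv, map_sum, pderiv_C_mul, Finset.mul_sum, mul_assoc]

end AuxPlaneHarmonic

/-- Vanishing lemma: a real polynomial in `n ≥ 3` variables, homogeneous of degree `m ≥ 2`,
whose restriction to every `2`-dimensional linear subspace of Euclidean `ℝⁿ` (expressed via
an orthonormal pair `u, v`) is harmonic, vanishes identically. -/
theorem homogeneous_all_planes_harmonic_eq_zero (n : ℕ) (hn : 3 ≤ n) (m : ℕ) (hm : 2 ≤ m)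
    (f : MvPolynomial (Fin n) ℝ) (hf : f.IsHomogeneous m)
    (F : EuclideanSpace ℝ (Fin n) → ℝ)
    (hF : ∀ p : EuclideanSpace ℝ (Fin n), F p = MvPolynomial.eval (fun i => p i) f)
    (hharm : ∀ u v : EuclideanSpace ℝ (Fin n),
      ‖u‖ = 1 → ‖v‖ = 1 → ⟪u, v⟫ = 0 →
      ∀ s t : ℝ,
        deriv (fun s' => deriv (fun s'' => F (s'' • u + t • v)) s') s +
        deriv (fun t' => deriv (fun t'' => F (s • u + t'' • v)) t') t = 0) :
    f = 0 := by
  classical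
  have step1 : ∀ u v : EuclideanSpace ℝ (Fin n), ‖u‖ = 1 → ‖v‖ = 1 → ⟪u, v⟫ = 0 →
      ∀ s t : ℝ, eval (fun i => s * u i + t * v i)
        (Dv (fun i => u i) (Dv (fun i => u i) f)) +
      eval (fun i => s * u i + t * v i)
        (Dv (fun i => v i) (Dv (fun i => v i) f)) = 0 := by
    intro u v hu hv huv s t
    have h := hharm u v hu hv huv s t
    have e1 : (fun s'' : ℝ => F (s'' • u + t • v))
        = fun s'' => eval (fun i => (t * v i) + (u i) * s'') f := by
      funext y
      rw [hF]
      have hco : (fun i => (y • u + t • v) i) = fun i => t * v i + u i * y := by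
        funext i
        simp only [PiLp.add_apply, PiLp.smul_apply, smul_eq_mul]
        ring
      rw [hco]
    have e2 : (fun t'' : ℝ => F (s • u + t'' • v))
        = fun t'' => eval (fun i => (s * u i) + (v i) * t'') f := by
      funext y
      rw [hF]
      have hco : (fun i => (s • u + y • v) i) = fun i => s * u i + v i * y := by
        funext i
        simp only [PiLp.add_apply, PiLp.smul_apply, smul_eq_mul]
        ring
      rw [hco]
    simp only [e1, e2] at h
    rw [deriv2_eval_line, deriv2_eval_line] at h
    have p1 : (fun i => t * v i + u i * s) = (fun i => s * u i + t * v i) := by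
      funext i; ring
    have p2 : (fun i => s * u i + v i * t) = (fun i => s * u i + t * v i) := by
      funext i; ring
    rw [p1, p2] at h
    exact h
  have i0 : Fin n := ⟨0, by omega⟩
  set c : ℝ := (2 - (n : ℝ)) * ((m : ℝ) * ((m : ℝ) - 1)) with hcdef
  have key : rsq n * lap f = C c * f := by
    apply MvPolynomial.funext
    intro x
    rw [eval_mul, eval_mul, eval_C]
    by_cases hx0 : x = 0
    · subst hx0
      have h1 : eval (0 : Fin n → ℝ) (rsq n) = 0 := by simp [rsq]
      have h2 : eval (0 : Fin n → ℝ) f = 0 := by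
        rw [eval_zero, constantCoeff_eq]
        exact hf.coeff_eq_zero (by simp; omega)
      rw [h1, h2, mul_zero, zero_mul]
    · -- nonzero point
      set p : EuclideanSpace ℝ (Fin n) := (WithLp.equiv 2 (Fin n → ℝ)).symm x with hpdef
      have hpi : ∀ i, p i = x i := fun i => rfl
      have hpne : p ≠ 0 := by
        intro h0
        apply hx0
        funext i
        calc x i = p i := (hpi i).symm
          _ = (0 : EuclideanSpace ℝ (Fin n)) i := by rw [h0]
          _ = 0 := rfl
      set r : ℝ := ‖p‖ with hr
      have hrpos : 0 < r := norm_pos_iff.mpr hpne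
      set u : EuclideanSpace ℝ (Fin n) := r⁻¹ • p with hu
      have hu1 : ‖u‖ = 1 := norm_smul_inv_norm hpne
      have hui : ∀ i, u i = r⁻¹ * x i := by
        intro i
        rw [hu, PiLp.smul_apply, smul_eq_mul, hpi i]
      have hxi : ∀ i, x i = r * u i := by
        intro i; rw [hui i]; field_simp
      -- orthonormal basis containing u
      have hcard : Module.finrank ℝ (EuclideanSpace ℝ (Fin n)) = Fintype.card (Fin n) := by
        simp
      have ho : Orthonormal ℝ (({i0} : Set (Fin n)).restrict fun _ : Fin n => u) := by
        constructor
        · intro i; exact hu1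
        · intro i j hij
          exfalso
          apply hij
          have hi := i.2
          have hj := j.2
          apply Subtype.ext
          rw [Set.mem_singleton_iff] at hi hj
          rw [hi, hj]
      obtain ⟨b, hb⟩ := ho.exists_orthonormalBasis_extension_of_card_eq hcard
      have hb0 : b i0 = u := hb i0 rfl
      -- (1): for k ≠ i0, the two pure second derivatives cancel at x
      have hcancel : ∀ k : Fin n, k ≠ i0 →
          eval x (Dv (fun i => (b k) i) (Dv (fun i => (b k) i) f))
            = - eval x (Dv (fun i => u i) (Dv (fun i => u i) f)) := by
        intro k hk
        have horth : ⟪u, b k⟫ = 0 := by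
          rw [← hb0]
          exact b.orthonormal.2 (Ne.symm hk)
        have h1 := step1 u (b k) hu1 (b.orthonormal.1 k) horth r 0
        have hpt : (fun i => r * u i + 0 * (b k) i) = x := by
          funext i
          rw [← hxi i]
          ring
        rw [hpt] at h1
        linarith
      -- (2): radial second derivative via Euler
      have hD2x : eval x (Dv (fun i => x i) (Dv (fun i => x i) f))
          = ((m - 1 : ℕ) : ℝ) * ((m : ℝ) * eval x f) := by
        have hgm1 : (Dv (fun i => x i) f).IsHomogeneous (m - 1) := Dv_isHomogeneous hf _
        have e1 : eval x (Dv (fun i => x i) (Dv (fun i => x i) f))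
            = ((m - 1 : ℕ) : ℝ) * eval x (Dv (fun i => x i) f) := euler_eval hgm1 x
        have e2 : eval x (Dv (fun i => x i) f) = (m : ℝ) * eval x f := euler_eval hf x
        rw [e1, e2]
      have hDscale : Dv (fun i => x i) (Dv (fun i => x i) f)
          = C r * (C r * Dv (fun i => u i) (Dv (fun i => u i) f)) := by
        have hx_fun : (fun i => x i) = fun i => r * u i := funext hxi
        rw [hx_fun, Dv_smul, Dv_smul, Dv_C_mul]
      have hHu : r * (r * eval x (Dv (fun i => u i) (Dv (fun i => u i) f)))
          = ((m - 1 : ℕ) : ℝ) * ((m : ℝ) * eval x f) := by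
        rw [← hD2x, hDscale]
        simp only [eval_mul, eval_C]
      -- (3): trace identity
      have hdelta : ∀ i j : Fin n, (∑ k, (b k) i * (b k) j) = if i = j then (1:ℝ) else 0 := by
        intro i j
        have h := b.sum_inner_mul_inner (EuclideanSpace.single i (1:ℝ))
          (EuclideanSpace.single j (1:ℝ))
        simp only [EuclideanSpace.inner_single_left, EuclideanSpace.inner_single_right,
          conj_trivial, one_mul, mul_one, EuclideanSpace.single_apply] at h
        rw [h]
        by_cases hij : i = j <;> simp [hij, eq_comm]
      have htrace : (∑ k, eval x (Dv (fun i => (b k) i) (Dv (fun i => (b k) i) f)))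
          = eval x (lap f) := by
        have e1 : ∀ k : Fin n, eval x (Dv (fun i => (b k) i) (Dv (fun i => (b k) i) f))
            = ∑ i, ∑ j, (b k) i * (b k) j * eval x (pderiv i (pderiv j f)) :=
          fun k => eval_DvDv _ f x
        rw [Finset.sum_congr rfl fun k _ => e1 k, Finset.sum_comm]
        have e2 : ∀ i : Fin n, (∑ k, ∑ j, (b k) i * (b k) j * eval x (pderiv i (pderiv j f)))
            = eval x (pderiv i (pderiv i f)) := by
          intro i
          rw [Finset.sum_comm]
          have e3 : ∀ j : Fin n, (∑ k, (b k) i * (b k) j * eval x (pderiv i (pderiv j f)))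
              = (if i = j then (1:ℝ) else 0) * eval x (pderiv i (pderiv j f)) := by
            intro j
            rw [← Finset.sum_mul, hdelta i j]
          rw [Finset.sum_congr rfl fun j _ => e3 j]
          simp
        rw [Finset.sum_congr rfl fun i _ => e2 i]
        simp [lap]
      -- combine
      have hsum : (∑ k, eval x (Dv (fun i => (b k) i) (Dv (fun i => (b k) i) f)))
          = eval x (Dv (fun i => u i) (Dv (fun i => u i) f))
            + ∑ k ∈ Finset.univ.erase i0,
                eval x (Dv (fun i => (b k) i) (Dv (fun i => (b k) i) f)) := by
        rw [← Finset.add_sum_erase Finset.univ _ (Finset.mem_univ i0), hb0]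
      have herase : (∑ k ∈ Finset.univ.erase i0,
            eval x (Dv (fun i => (b k) i) (Dv (fun i => (b k) i) f)))
          = ((n - 1 : ℕ) : ℝ) * (- eval x (Dv (fun i => u i) (Dv (fun i => u i) f))) := by
        rw [Finset.sum_congr rfl fun k hk => hcancel k (Finset.ne_of_mem_erase hk)]
        rw [Finset.sum_const, Finset.card_erase_of_mem (Finset.mem_univ i0),
          Finset.card_univ, Fintype.card_fin]
        simp [nsmul_eq_mul]
      have hrsq : eval x (rsq n) = r * r := by
        have hinner : ⟪p, p⟫ = r * r := by
          rw [real_inner_self_eq_norm_mul_norm]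
        rw [PiLp.inner_apply] at hinner
        simp only [RCLike.inner_apply, conj_trivial] at hinner
        simp only [rsq, map_sum, eval_mul, eval_X]
        rw [← hinner]
        exact Finset.sum_congr rfl fun i _ => by rw [hpi i]
      -- final arithmetic
      rw [hrsq]
      have hlapval : eval x (lap f)
          = eval x (Dv (fun i => u i) (Dv (fun i => u i) f))
            + ((n - 1 : ℕ) : ℝ)
              * (- eval x (Dv (fun i => u i) (Dv (fun i => u i) f))) := by
        rw [← htrace, hsum, herase]
      rw [hlapval]
      have hn' : ((n - 1 : ℕ) : ℝ) = (n : ℝ) - 1 := by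
        rw [Nat.cast_sub (by omega)]; norm_num
      have hm' : ((m - 1 : ℕ) : ℝ) = (m : ℝ) - 1 := by
        rw [Nat.cast_sub (by omega)]; norm_num
      rw [hn', hcdef]
      rw [hm'] at hHu
      linear_combination (2 - (n : ℝ)) * hHu
  have hclt : c < 0 := by
    have h3 : (3 : ℝ) ≤ (n : ℝ) := by exact_mod_cast hn
    have h2 : (2 : ℝ) ≤ (m : ℝ) := by exact_mod_cast hm
    have hpos : (0 : ℝ) < (m : ℝ) * ((m : ℝ) - 1) := by nlinarith
    have hneg : (2 : ℝ) - (n : ℝ) < 0 := by linarith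
    rw [hcdef]
    exact mul_neg_of_neg_of_pos hneg hpos
  exact vanish m f hf c hclt key
end

section
/- Let n ≥ 3, let E = EuclideanSpace ℝ (Fin n), let θ ∈ ℝ with 0 < θ < π, and let f : E → ℝ be any function. Suppose that f x = f y whenever ‖x‖ = ‖y‖ and ⟪x, y⟫ = Real.cos θ * (‖x‖ * ‖y‖). Then f x = f y whenever ‖x‖ = ‖y‖, i.e. f is constant on every sphere centered at the origin. -/
open scoped RealInnerProductSpace

lemma exists_orth_unit {n : ℕ} (hn : 3 ≤ n) (x y : EuclideanSpace ℝ (Fin n)) :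
    ∃ z : EuclideanSpace ℝ (Fin n), ⟪x, z⟫ = 0 ∧ ⟪y, z⟫ = 0 ∧ ‖z‖ = 1 := by
  classical
  set K : Submodule ℝ (EuclideanSpace ℝ (Fin n)) := Submodule.span ℝ {x, y} with hK
  have hcard : Module.finrank ℝ K ≤ 2 := by
    have h1 := finrank_span_finset_le_card (R := ℝ) ({x, y} : Finset (EuclideanSpace ℝ (Fin n)))
    have h2 : ({x, y} : Finset (EuclideanSpace ℝ (Fin n))).card ≤ 2 :=
      le_trans (Finset.card_insert_le _ _) (by simp)
    have h3 : ((({x, y} : Finset (EuclideanSpace ℝ (Fin n))) : Set (EuclideanSpace ℝ (Fin n)))) =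
        ({x, y} : Set (EuclideanSpace ℝ (Fin n))) := by simp
    rw [Set.finrank, h3] at h1
    exact le_trans h1 h2
  have hbot : Kᗮ ≠ ⊥ := by
    intro hb
    have hsum := Submodule.finrank_add_finrank_orthogonal K
    rw [hb, finrank_euclideanSpace_fin,
      finrank_bot ℝ (EuclideanSpace ℝ (Fin n)), add_zero] at hsum
    omega
  obtain ⟨z0, hz0K, hz0⟩ := Submodule.exists_mem_ne_zero_of_ne_bot hbot
  refine ⟨(‖z0‖⁻¹ : ℝ) • z0, ?_, ?_, ?_⟩
  · rw [real_inner_smul_right]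
    have h := (Submodule.mem_orthogonal K z0).mp hz0K x (Submodule.subset_span (by simp))
    rw [h]; ring
  · rw [real_inner_smul_right]
    have h := (Submodule.mem_orthogonal K z0).mp hz0K y (Submodule.subset_span (by simp))
    rw [h]; ring
  · rw [norm_smul]
    simp [norm_ne_zero_iff.mpr hz0]

lemma angle_step {n : ℕ} (hn : 3 ≤ n) (f : EuclideanSpace ℝ (Fin n) → ℝ) (β χ : ℝ)
    (hβ0 : 0 ≤ β) (hβπ : β ≤ Real.pi) (hχ0 : 0 ≤ χ) (hχπ : χ ≤ Real.pi)
    (h1 : χ ≤ 2 * β) (h2 : χ ≤ 2 * Real.pi - 2 * β)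
    (hQ : ∀ x y : EuclideanSpace ℝ (Fin n),
      ‖x‖ = ‖y‖ → ⟪x, y⟫ = Real.cos β * (‖x‖ * ‖y‖) → f x = f y) :
    ∀ x y : EuclideanSpace ℝ (Fin n),
      ‖x‖ = ‖y‖ → ⟪x, y⟫ = Real.cos χ * (‖x‖ * ‖y‖) → f x = f y := by
  intro x y hxy hin
  obtain ⟨r, hr⟩ : ∃ r : ℝ, ‖x‖ = r := ⟨_, rfl⟩
  have hyr : ‖y‖ = r := by rw [← hxy, hr]
  rw [hr, hyr] at hin
  have hr0 : (0:ℝ) ≤ r := by rw [← hr]; exact norm_nonneg x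
  rcases eq_or_lt_of_le hr0 with h0 | h0
  · have hx0 : x = 0 := norm_eq_zero.mp (by rw [hr, ← h0])
    have hy0 : y = 0 := norm_eq_zero.mp (by rw [hyr, ← h0])
    rw [hx0, hy0]
  rcases eq_or_lt_of_le hχπ with hpi | hlt
  · -- χ = π : y = -x and β = π / 2
    have hβ : Real.cos β = 0 := by
      have hβeq : β = Real.pi / 2 := by
        rw [hpi] at h1 h2
        exact le_antisymm (by linarith) (by linarith)
      rw [hβeq, Real.cos_pi_div_two]
    have hinn : ⟪x, -y⟫ = ‖x‖ * ‖-y‖ := by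
      rw [inner_neg_right, hin, hpi, Real.cos_pi, norm_neg, hr, hyr]; ring
    have h1' := inner_eq_norm_mul_iff_real.mp hinn
    rw [norm_neg, hyr, hr] at h1'
    have hxny : x = -y := smul_right_injective _ (ne_of_gt h0) h1'
    have hyx : y = -x := by rw [hxny, neg_neg]
    obtain ⟨z, hzx, -, hz1⟩ := exists_orth_unit hn x x
    have hzx' : ⟪z, x⟫ = 0 := by rw [real_inner_comm]; exact hzx
    have hwn : ‖r • z‖ = r := by
      rw [norm_smul, hz1, Real.norm_eq_abs, abs_of_pos h0, mul_one]
    have e1 : f x = f (r • z) := by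
      apply hQ x (r • z) (by rw [hwn, hr])
      rw [real_inner_smul_right, hzx, hβ]; ring
    have e2 : f (r • z) = f y := by
      apply hQ (r • z) y (by rw [hwn, hyr])
      rw [hyx, inner_neg_right, real_inner_smul_left, hzx', hβ]; ring
    rw [e1, e2]
  -- now χ < π
  have hc1 : Real.cos Real.pi < Real.cos χ := by
    rcases eq_or_lt_of_le hχ0 with hz | hz
    · rw [← hz, Real.cos_zero, Real.cos_pi]; norm_num
    · exact Real.strictAntiOn_cos ⟨hχ0, hχπ⟩ ⟨by positivity, le_refl _⟩ hlt
  rw [Real.cos_pi] at hc1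
  set c : ℝ := Real.cos χ with hcdef
  have hc0 : (0:ℝ) < 1 + c := by linarith
  have hc0' : (1 + c) ≠ 0 := ne_of_gt hc0
  have hkey : 2 * Real.cos β ^ 2 ≤ 1 + c := by
    have hhalf : Real.cos χ = 2 * Real.cos (χ / 2) ^ 2 - 1 := by
      have hh := Real.cos_sq (χ / 2)
      rw [mul_div_cancel₀ χ (by norm_num : (2:ℝ) ≠ 0)] at hh
      linarith
    have hub : Real.cos β ≤ Real.cos (χ / 2) :=
      Real.cos_le_cos_of_nonneg_of_le_pi (by linarith) hβπ (by linarith)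
    have hlb : -Real.cos (χ / 2) ≤ Real.cos β := by
      have hps : Real.cos (Real.pi - χ / 2) = -Real.cos (χ / 2) := Real.cos_pi_sub _
      rw [← hps]
      exact Real.cos_le_cos_of_nonneg_of_le_pi hβ0 (by linarith [Real.pi_pos]) (by linarith)
    have hsq := sq_le_sq' hlb hub
    rw [hcdef, hhalf]
    linarith
  obtain ⟨z, hzx, hzy, hz1⟩ := exists_orth_unit hn x y
  set a : ℝ := Real.cos β / (1 + c) with ha
  set s2 : ℝ := r ^ 2 * (1 - 2 * Real.cos β ^ 2 / (1 + c)) with hs2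
  have hs2nn : 0 ≤ s2 := by
    apply mul_nonneg (sq_nonneg r)
    rw [sub_nonneg, div_le_one hc0]
    exact hkey
  set s : ℝ := Real.sqrt s2 with hs
  set w : EuclideanSpace ℝ (Fin n) := a • (x + y) + s • z with hw
  have hxx : ⟪x, x⟫ = r ^ 2 := by rw [real_inner_self_eq_norm_sq, hr]
  have hyy : ⟪y, y⟫ = r ^ 2 := by rw [real_inner_self_eq_norm_sq, hyr]
  have hzz : ⟪z, z⟫ = 1 := by rw [real_inner_self_eq_norm_sq, hz1]; norm_num
  have hxy' : ⟪x, y⟫ = c * r ^ 2 := by rw [hin]; ring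
  have hyx' : ⟪y, x⟫ = c * r ^ 2 := by rw [real_inner_comm]; exact hxy'
  have hzx' : ⟪z, x⟫ = 0 := by rw [real_inner_comm]; exact hzx
  have hzy' : ⟪z, y⟫ = 0 := by rw [real_inner_comm]; exact hzy
  have hss : s * s = r ^ 2 * (1 - 2 * Real.cos β ^ 2 / (1 + c)) := by
    rw [hs, Real.mul_self_sqrt hs2nn, hs2]
  have hxw : ⟪x, w⟫ = a * (1 + c) * r ^ 2 := by
    simp only [hw, inner_add_right, inner_add_left, real_inner_smul_right, real_inner_smul_left,
      hxx, hyy, hzz, hxy', hyx', hzx, hzy, hzx', hzy']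
    ring
  have hwy : ⟪w, y⟫ = a * (1 + c) * r ^ 2 := by
    simp only [hw, inner_add_right, inner_add_left, real_inner_smul_right, real_inner_smul_left,
      hxx, hyy, hzz, hxy', hyx', hzx, hzy, hzx', hzy']
    ring
  have hww : ⟪w, w⟫ = 2 * a ^ 2 * (1 + c) * r ^ 2 + s * s := by
    simp only [hw, inner_add_right, inner_add_left, real_inner_smul_right, real_inner_smul_left,
      hxx, hyy, hzz, hxy', hyx', hzx, hzy, hzx', hzy']
    ring
  have hxw2 : ⟪x, w⟫ = Real.cos β * r ^ 2 := by
    rw [hxw, ha, div_mul_cancel₀ _ hc0']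
  have hwy2 : ⟪w, y⟫ = Real.cos β * r ^ 2 := by
    rw [hwy, ha, div_mul_cancel₀ _ hc0']
  have hww2 : ⟪w, w⟫ = r ^ 2 := by
    rw [hww, hss, ha]
    field_simp
    ring
  have hwn : ‖w‖ = r := by
    have hsq : ‖w‖ ^ 2 = r ^ 2 := by rw [← real_inner_self_eq_norm_sq, hww2]
    have hfac : (‖w‖ - r) * (‖w‖ + r) = 0 := by linear_combination hsq
    rcases mul_eq_zero.mp hfac with hc | hc
    · linarith
    · linarith [norm_nonneg w]
  have e1 : f x = f w := by
    apply hQ x w (by rw [hwn, hr])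
    rw [hxw2, hr, hwn]; ring
  have e2 : f w = f y := by
    apply hQ w y (by rw [hwn, hyr])
    rw [hwy2, hwn, hyr]; ring
  rw [e1, e2]

/-- Fixed-angle connectivity of spheres: in Euclidean `ℝⁿ` with `n ≥ 3`, a function taking
equal values on any two points of equal norm making a fixed angle `θ ∈ (0, π)` is constant
on every sphere centered at the origin. -/
theorem fixed_angle_implies_radial (n : ℕ) (hn : 3 ≤ n) (θ : ℝ)
    (hθ0 : 0 < θ) (hθπ : θ < Real.pi)
    (f : EuclideanSpace ℝ (Fin n) → ℝ)
    (h : ∀ x y : EuclideanSpace ℝ (Fin n),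
      ‖x‖ = ‖y‖ → ⟪x, y⟫ = Real.cos θ * (‖x‖ * ‖y‖) → f x = f y) :
    ∀ x y : EuclideanSpace ℝ (Fin n), ‖x‖ = ‖y‖ → f x = f y := by
  set m : ℝ := min (2 * θ) (2 * Real.pi - 2 * θ) with hm
  have hm0 : 0 < m := lt_min (by linarith) (by linarith)
  have main : ∀ k : ℕ, ∀ χ : ℝ, 0 ≤ χ → χ ≤ Real.pi → χ ≤ 2 ^ k * m →
      ∀ x y : EuclideanSpace ℝ (Fin n),
        ‖x‖ = ‖y‖ → ⟪x, y⟫ = Real.cos χ * (‖x‖ * ‖y‖) → f x = f y := by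
    intro k
    induction k with
    | zero =>
      intro χ hχ0 hχπ hχm
      rw [pow_zero, one_mul] at hχm
      exact angle_step hn f θ χ (le_of_lt hθ0) (le_of_lt hθπ) hχ0 hχπ
        (le_trans hχm (min_le_left _ _)) (le_trans hχm (min_le_right _ _)) h
    | succ k ih =>
      intro χ hχ0 hχπ hχm
      rcases le_total χ (2 ^ k * m) with hle | hle
      · exact ih χ hχ0 hχπ hle
      · have hhalf : χ / 2 ≤ 2 ^ k * m := by
          rw [pow_succ] at hχm
          linarith
        exact angle_step hn f (χ / 2) χ (by linarith) (by linarith) hχ0 hχπ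
          (by linarith) (by linarith)
          (ih (χ / 2) (by linarith) (by linarith) hhalf)
  obtain ⟨k, hk⟩ := pow_unbounded_of_one_lt (Real.pi / m) (by norm_num : (1:ℝ) < 2)
  have hkm : Real.pi ≤ 2 ^ k * m := by
    rw [div_lt_iff₀ hm0] at hk
    linarith
  intro x y hxy
  rcases eq_or_lt_of_le (norm_nonneg x) with h0 | h0
  · have hx0 : x = 0 := by rw [← norm_eq_zero, ← h0]
    have hy0 : y = 0 := by rw [← norm_eq_zero, ← hxy, ← h0]
    rw [hx0, hy0]
  have hy0 : 0 < ‖y‖ := hxy ▸ h0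
  set t : ℝ := ⟪x, y⟫ / (‖x‖ * ‖y‖) with ht
  have htle : |t| ≤ 1 := by
    rw [ht, abs_div, abs_of_pos (by positivity : (0:ℝ) < ‖x‖ * ‖y‖),
      div_le_one (by positivity)]
    exact abs_real_inner_le_norm x y
  obtain ⟨ht1, ht2⟩ := abs_le.mp htle
  have hχ0 : 0 ≤ Real.arccos t := Real.arccos_nonneg t
  have hχπ : Real.arccos t ≤ Real.pi := Real.arccos_le_pi t
  have hcos : Real.cos (Real.arccos t) = t := Real.cos_arccos ht1 ht2
  apply main k (Real.arccos t) hχ0 hχπ (le_trans hχπ hkm) x y hxy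
  rw [hcos, ht, div_mul_cancel₀ _ (by positivity : ‖x‖ * ‖y‖ ≠ 0)]
end

section
/- Let V be a finite-dimensional ℂ-vector space, let B : V →ₗ[ℂ] V →ₗ[ℂ] ℂ be a symmetric bilinear form (B x y = B y x) which is nondegenerate (if B x y = 0 for all y then x = 0). Let E be a 2-dimensional subspace of V (finrank ℂ E = 2) that is totally isotropic: B e e' = 0 for all e, e' ∈ E. Then the subspace W = {f : E →ₗ[ℂ] V | ∀ e ∈ E, B (f e) e = 0} of the space of linear maps E →ₗ[ℂ] V satisfies finrank ℂ W = 2 * finrank ℂ V − 3, i.e. W has codimension 3 in Hom(E, V). -/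
/-- Linear-algebra step for the contact structure on the isotropic Grassmannian: if `B` is a
nondegenerate symmetric bilinear form on a finite-dimensional `ℂ`-vector space `V` and
`E ⊆ V` is a `2`-dimensional totally isotropic subspace, then the space of linear maps
`f : E → V` with `B (f e) e = 0` for all `e ∈ E` has dimension `2·dim V − 3`. -/
theorem isotropic_grassmannian_tangent_dim (V : Type*) [AddCommGroup V] [Module ℂ V]
    [FiniteDimensional ℂ V]
    (B : V →ₗ[ℂ] V →ₗ[ℂ] ℂ)
    (hsymm : ∀ x y : V, B x y = B y x)
    (hnondeg : ∀ x : V, (∀ y : V, B x y = 0) → x = 0)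
    (E : Submodule ℂ V) (hE : Module.finrank ℂ E = 2)
    (hiso : ∀ e ∈ E, ∀ e' ∈ E, B e e' = 0) :
    ∃ W : Submodule ℂ (E →ₗ[ℂ] V),
      (∀ f : E →ₗ[ℂ] V, f ∈ W ↔ ∀ e : E, B (f e) (e : V) = 0) ∧
      Module.finrank ℂ W = 2 * Module.finrank ℂ V - 3 := by
  classical
  let b : Module.Basis (Fin 2) ℂ E := Module.finBasisOfFinrankEq ℂ E hE
  set e1 : E := b 0 with he1
  set e2 : E := b 1 with he2
  -- B as a map to the dual is surjective
  have hBinj : Function.Injective B := by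
    rw [← LinearMap.ker_eq_bot, LinearMap.ker_eq_bot']
    intro x hx
    exact hnondeg x fun y => by rw [hx]; rfl
  have hBsurj : Function.Surjective B := by
    rw [← LinearMap.range_eq_top]
    apply Submodule.eq_top_of_finrank_eq
    rw [LinearMap.finrank_range_of_inj hBinj]
    exact (Subspace.dual_finrank_eq (K := ℂ) (V := V)).symm
  -- restrict to E
  have hψ : Function.Surjective (E.subtype.dualMap ∘ₗ B) :=
    (LinearMap.dualMap_surjective_of_injective E.injective_subtype).comp hBsurj
  obtain ⟨v1, hv1⟩ := hψ (b.coord 0)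
  obtain ⟨v2, hv2⟩ := hψ (b.coord 1)
  have hv : ∀ (v : V) (i j : Fin 2), E.subtype.dualMap (B v) = b.coord i →
      B v (b j : V) = if i = j then 1 else 0 := by
    intro v i j h
    have := LinearMap.congr_fun h (b j)
    simp only [LinearMap.dualMap_apply, Submodule.coe_subtype, Module.Basis.coord_apply,
      Module.Basis.repr_self, Finsupp.single_apply] at this
    rw [this]
    rcases eq_or_ne i j with rfl | hij
    · simp
    · simp [hij, Ne.symm hij]
  have h11 : B v1 (e1 : V) = 1 := by simpa using hv v1 0 0 hv1
  have h12 : B v1 (e2 : V) = 0 := by simpa using hv v1 0 1 hv1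
  have h21 : B v2 (e1 : V) = 0 := by simpa using hv v2 1 0 hv2
  have h22 : B v2 (e2 : V) = 1 := by simpa using hv v2 1 1 hv2
  -- the linear functionals cutting out W
  let L : E → E → ((E →ₗ[ℂ] V) →ₗ[ℂ] ℂ) := fun a c =>
    (B.flip (c : V)).comp (LinearMap.applyₗ a)
  have hL : ∀ (a c : E) (f : E →ₗ[ℂ] V), L a c f = B (f a) (c : V) := fun _ _ _ => rfl
  let Φ : (E →ₗ[ℂ] V) →ₗ[ℂ] (Fin 3 → ℂ) :=
    LinearMap.pi ![L e1 e1, L e2 e2, L e1 e2 + L e2 e1]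
  have hΦ0 : ∀ f, Φ f 0 = B (f e1) (e1 : V) := fun f => rfl
  have hΦ1 : ∀ f, Φ f 1 = B (f e2) (e2 : V) := fun f => rfl
  have hΦ2 : ∀ f, Φ f 2 = B (f e1) (e2 : V) + B (f e2) (e1 : V) := fun f => rfl
  refine ⟨LinearMap.ker Φ, ?_, ?_⟩
  · intro f
    constructor
    · intro hf e
      have hf' : Φ f = 0 := hf
      have h0 : B (f e1) (e1 : V) = 0 := by rw [← hΦ0 f, hf']; simp
      have h1 : B (f e2) (e2 : V) = 0 := by rw [← hΦ1 f, hf']; simp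
      have h2 : B (f e1) (e2 : V) + B (f e2) (e1 : V) = 0 := by rw [← hΦ2 f, hf']; simp
      have he : (b.repr e 0) • e1 + (b.repr e 1) • e2 = e := by
        have := b.sum_repr e
        rwa [Fin.sum_univ_two] at this
      set r0 := b.repr e 0
      set r1 := b.repr e 1
      rw [← he]
      simp only [map_add, map_smul, Submodule.coe_add, Submodule.coe_smul,
        LinearMap.add_apply, LinearMap.smul_apply, smul_eq_mul]
      linear_combination r0 * r0 * h0 + r1 * r1 * h1 + r0 * r1 * h2
    · intro hf
      have h0 := hf e1
      have h1 := hf e2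
      have h2 := hf (e1 + e2)
      simp only [map_add, Submodule.coe_add, LinearMap.add_apply] at h2
      show Φ f = 0
      funext i
      fin_cases i
      · show Φ f 0 = (0 : ℂ); rw [hΦ0 f, h0]
      · show Φ f 1 = (0 : ℂ); rw [hΦ1 f, h1]
      · show Φ f 2 = (0 : ℂ); rw [hΦ2 f]; linear_combination h2 - h0 - h1
  · -- Φ is surjective
    have hsurj : Function.Surjective Φ := by
      intro c
      refine ⟨b.constr ℂ ![c 0 • v1 + c 2 • v2, c 1 • v2], ?_⟩
      have hfe1 : (b.constr ℂ ![c 0 • v1 + c 2 • v2, c 1 • v2]) e1 = c 0 • v1 + c 2 • v2 := by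
        rw [he1]; exact b.constr_basis ℂ _ 0
      have hfe2 : (b.constr ℂ ![c 0 • v1 + c 2 • v2, c 1 • v2]) e2 = c 1 • v2 := by
        rw [he2]; exact b.constr_basis ℂ _ 1
      funext i
      fin_cases i
      · show Φ _ 0 = c 0
        rw [hΦ0, hfe1]
        simp [h11, h21, smul_eq_mul]
      · show Φ _ 1 = c 1
        rw [hΦ1, hfe2]
        simp [h22, smul_eq_mul]
      · show Φ _ 2 = c 2
        rw [hΦ2, hfe1, hfe2]
        simp [h11, h12, h21, h22, smul_eq_mul]
    have hrange : LinearMap.range Φ = ⊤ := LinearMap.range_eq_top.mpr hsurj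
    have hrk := Φ.finrank_range_add_finrank_ker
    rw [hrange, finrank_top] at hrk
    have hpi : Module.finrank ℂ (Fin 3 → ℂ) = 3 := by simp
    have hdom : Module.finrank ℂ (E →ₗ[ℂ] V) = 2 * Module.finrank ℂ V := by
      rw [Module.finrank_linearMap, hE]
    omega
end

section
/- Let n ≥ 3. Suppose X : Fin n → MvPolynomial (Fin n) ℂ and μ ∈ MvPolynomial (Fin n) ℂ satisfy, for all i j : Fin n, pderiv i (X j) + pderiv j (X i) = if i = j then μ else 0. Then there exist unique a b : Fin n → ℂ, c : ℂ, and a matrix A : Matrix (Fin n) (Fin n) ℂ with A j i = −A i j for all i j, such that for every j: X j = C (a j) + (∑ i, C (A j i) * X_poly i) + C c * X_poly j + 2 * (∑ i, C (b i) * X_poly i) * X_poly j − (∑ i, (X_poly i)^2) * C (b j), where X_poly i denotes the variable MvPolynomial.X i and C the constant embedding. -/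
open MvPolynomial

namespace CK
variable {σ : Type*} [DecidableEq σ]
set_option linter.unusedSectionVars false

lemma coeff_pderiv (i : σ) (m : σ →₀ ℕ) (f : MvPolynomial σ ℂ) :
    coeff m (pderiv i f) = ((m i : ℂ) + 1) * coeff (m + Finsupp.single i 1) f := by
  induction f using MvPolynomial.induction_on' with
  | add p q hp hq => simp [map_add, hp, hq, mul_add]
  | monomial s a =>
    rw [pderiv_monomial, coeff_monomial, coeff_monomial]
    by_cases h : s = m + Finsupp.single i 1
    · subst h
      rw [if_pos (by simp), if_pos rfl]
      simp [mul_comm]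
    · rw [if_neg h, mul_zero]
      by_cases h0 : s i = 0
      · split_ifs <;> simp [h0]
      · rw [if_neg]
        intro heq
        exact h (by rw [← heq, tsub_add_cancel_of_le (by
          simpa [Finsupp.single_le_iff] using Nat.one_le_iff_ne_zero.2 h0)])

lemma eq_C_of_pderiv (f : MvPolynomial σ ℂ) (h : ∀ i, pderiv i f = 0) :
    f = C (constantCoeff f) := by
  ext m
  by_cases hm : m = 0
  · subst hm; simp [constantCoeff_eq]
  · obtain ⟨i, hi⟩ := Finsupp.ne_iff.1 hm
    rw [Finsupp.coe_zero, Pi.zero_apply] at hi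
    have h1 : Finsupp.single i 1 ≤ m := by
      simpa [Finsupp.single_le_iff] using Nat.one_le_iff_ne_zero.2 hi
    have := coeff_pderiv i (m - Finsupp.single i 1) f
    rw [h i, coeff_zero, tsub_add_cancel_of_le h1] at this
    have hc : coeff m f = 0 := by
      rcases mul_eq_zero.1 this.symm with h' | h'
      · exact absurd h' (Nat.cast_add_one_ne_zero _)
      · exact h'
    rw [hc, coeff_C, if_neg (fun h' => hm h'.symm)]

lemma pderiv_comm' (i j : σ) (f : MvPolynomial σ ℂ) :
    pderiv i (pderiv j f) = pderiv j (pderiv i f) := by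
  ext m
  simp only [coeff_pderiv]
  by_cases h : i = j
  · subst h; ring
  · rw [add_right_comm m]
    simp only [Finsupp.add_apply, Finsupp.single_apply, if_neg h, if_neg (Ne.symm h)]
    ring

variable [Fintype σ]

lemma pX (k j : σ) : pderiv k (X j : MvPolynomial σ ℂ) = if k = j then 1 else 0 := by
  rw [pderiv_X, Pi.single_apply]
  simp [eq_comm]

lemma p2 (l : σ) (p : MvPolynomial σ ℂ) : pderiv l (2 * p) = 2 * pderiv l p := by
  rw [show (2 : MvPolynomial σ ℂ) = C 2 by rw [map_ofNat], pderiv_C_mul]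

lemma pderiv_two (l : σ) : pderiv l (2 : MvPolynomial σ ℂ) = 0 := by
  rw [show (2 : MvPolynomial σ ℂ) = C 2 by rw [map_ofNat], pderiv_C]

lemma pderiv_lin (v : σ → ℂ) (k : σ) :
    pderiv k (∑ i, C (v i) * X i) = C (v k) := by
  rw [map_sum, Finset.sum_eq_single k]
  · rw [pderiv_C_mul, pX, if_pos rfl, mul_one]
  · intro i _ hik
    rw [pderiv_C_mul, pX, if_neg (Ne.symm hik), mul_zero]
  · simp

lemma pderiv_r2 (k : σ) :
    pderiv k (∑ i, (X i : MvPolynomial σ ℂ) ^ 2) = 2 * X k := by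
  rw [map_sum, Finset.sum_eq_single k]
  · rw [pderiv_pow, pX, if_pos rfl, mul_one]; norm_num
  · intro i _ hik
    rw [pderiv_pow, pX, if_neg (Ne.symm hik), mul_zero]
  · simp

lemma cc_lin (v : σ → ℂ) : constantCoeff (∑ i, C (v i) * X i) = 0 := by simp

lemma cc_r2 : constantCoeff (∑ i, (X i : MvPolynomial σ ℂ) ^ 2) = 0 := by simp

lemma eq_affine (f : MvPolynomial σ ℂ) (h : ∀ i j, pderiv i (pderiv j f) = 0) :
    f = C (constantCoeff f) + ∑ i, C (constantCoeff (pderiv i f)) * X i := by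
  have hg : ∀ i, pderiv i (f - (C (constantCoeff f)
      + ∑ k, C (constantCoeff (pderiv k f)) * X k)) = 0 := by
    intro i
    rw [map_sub, map_add, pderiv_C, pderiv_lin, zero_add, sub_eq_zero]
    exact eq_C_of_pderiv (pderiv i f) (fun j => h j i)
  have h0 := eq_C_of_pderiv _ hg
  rw [map_sub, map_add, constantCoeff_C, cc_lin, add_zero, sub_self, map_zero,
    sub_eq_zero] at h0
  exact h0

end CK

set_option maxHeartbeats 1000000 in
/-- The degree-zero part of the derived conformal algebra of flat complex `n`-space, `n ≥ 3`:
every polynomial conformal Killing field `X` (i.e. `∂ᵢXⱼ + ∂ⱼXᵢ = μ δᵢⱼ` for some polynomial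
`μ`) is uniquely of the form translation + rotation + dilation + special conformal
transformation. -/
theorem flat_conformal_killing_classification (n : ℕ) (hn : 3 ≤ n)
    (X : Fin n → MvPolynomial (Fin n) ℂ) (μ : MvPolynomial (Fin n) ℂ)
    (hkill : ∀ i j : Fin n,
      pderiv i (X j) + pderiv j (X i) = if i = j then μ else 0) :
    ∃! p : (Fin n → ℂ) × (Fin n → ℂ) × ℂ × Matrix (Fin n) (Fin n) ℂ,
      (∀ i j : Fin n, p.2.2.2 j i = -p.2.2.2 i j) ∧
      ∀ j : Fin n,
        X j = C (p.1 j) + (∑ i, C (p.2.2.2 j i) * MvPolynomial.X i)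
          + C p.2.2.1 * MvPolynomial.X j
          + 2 * (∑ i, C (p.2.1 i) * MvPolynomial.X i) * MvPolynomial.X j
          - (∑ i, (MvPolynomial.X i) ^ 2) * C (p.2.1 j) := by
  classical
  have cancel2 : ∀ p q : MvPolynomial (Fin n) ℂ, 2 * p = 2 * q → p = q :=
    fun p q h => mul_left_cancel₀ two_ne_zero h
  -- Step A: second derivative identity
  have key : ∀ i j k : Fin n, 2 * pderiv i (pderiv j (X k)) =
      (if j = k then pderiv i μ else 0) + (if i = k then pderiv j μ else 0)
        - (if i = j then pderiv k μ else 0) := by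
    intro i j k
    have h1 := congrArg (pderiv i) (hkill j k)
    have h2 := congrArg (pderiv j) (hkill i k)
    have h3 := congrArg (pderiv k) (hkill i j)
    simp only [map_add, apply_ite (pderiv i), apply_ite (pderiv j), apply_ite (pderiv k),
      map_zero] at h1 h2 h3
    linear_combination h1 + h2 - h3 - CK.pderiv_comm' i k (X j)
      - CK.pderiv_comm' j k (X i) - CK.pderiv_comm' j i (X k)
  -- Step B: Hessian of μ vanishes
  have key2 : ∀ l i j k : Fin n, 2 * pderiv l (pderiv i (pderiv j (X k))) =
      (if j = k then pderiv l (pderiv i μ) else 0)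
        + (if i = k then pderiv l (pderiv j μ) else 0)
        - (if i = j then pderiv l (pderiv k μ) else 0) := by
    intro l i j k
    have := congrArg (pderiv l) (key i j k)
    simpa only [map_add, map_sub, apply_ite (pderiv l), map_zero, CK.p2] using this
  have iden : ∀ l i j k : Fin n,
      (if j = k then pderiv l (pderiv i μ) else 0)
        + (if i = k then pderiv l (pderiv j μ) else 0)
        - (if i = j then pderiv l (pderiv k μ) else 0)
      = (if j = k then pderiv i (pderiv l μ) else 0)
        + (if l = k then pderiv i (pderiv j μ) else 0)
        - (if l = j then pderiv i (pderiv k μ) else 0) := by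
    intro l i j k
    rw [← key2 l i j k, ← key2 i l j k, CK.pderiv_comm' l i]
  have third : ∀ a b : Fin n, ∃ i, i ≠ a ∧ i ≠ b := by
    intro a b
    by_contra hc
    push_neg at hc
    have hsub : (Finset.univ : Finset (Fin n)).card ≤ ({a, b} : Finset (Fin n)).card := by
      apply Finset.card_le_card
      intro i _
      simp only [Finset.mem_insert, Finset.mem_singleton]
      by_cases h : i = a
      · exact Or.inl h
      · exact Or.inr (hc i h)
    have h2 : ({a, b} : Finset (Fin n)).card ≤ 2 :=
      (Finset.card_insert_le _ _).trans (by simp)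
    have : n ≤ 2 := by simpa using hsub.trans h2
    omega
  have hess : ∀ a b : Fin n, pderiv a (pderiv b μ) = 0 := by
    have offdiag : ∀ a b : Fin n, a ≠ b → pderiv a (pderiv b μ) = 0 := by
      intro a b hab
      obtain ⟨i, hia, hib⟩ := third a b
      have h := iden a i b i
      simp only [if_pos rfl, eq_self_iff_true, if_true, if_neg (Ne.symm hib), if_neg hib,
        if_neg (Ne.symm hia), if_neg hab] at h
      simpa using h
    intro a b
    by_cases hab : a = b
    · subst hab
      obtain ⟨i, hia, -⟩ := third a a
      obtain ⟨j, hji, hja⟩ := third i a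
      have r1 : ∀ x y : Fin n, x ≠ y → pderiv y (pderiv y μ) = - pderiv x (pderiv x μ) := by
        intro x y hxy
        have h := iden y x y x
        simp only [if_pos rfl, eq_self_iff_true, if_true, if_neg hxy,
          if_neg (Ne.symm hxy)] at h
        linear_combination h
      have e1 := r1 i a hia
      have e2 := r1 j a hja
      have e3 := r1 j i hji
      apply cancel2
      rw [mul_zero]
      linear_combination e1 + e2 - e3
    · exact offdiag a b hab
  -- Step C: μ is affine
  set m0 : ℂ := constantCoeff μ with hm0
  set mm : Fin n → ℂ := fun i => constantCoeff (pderiv i μ) with hmm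
  have hdμ : ∀ i, pderiv i μ = C (mm i) := fun i =>
    CK.eq_C_of_pderiv _ (fun a => hess a i)
  have hμaff : μ = C m0 + ∑ i, C (mm i) * MvPolynomial.X i := by
    have := CK.eq_affine μ hess
    simpa using this
  set b : Fin n → ℂ := fun i => mm i / 4 with hb
  set lin : (Fin n → ℂ) → MvPolynomial (Fin n) ℂ :=
    fun v => ∑ i, C (v i) * MvPolynomial.X i with hlin
  set r2 : MvPolynomial (Fin n) ℂ := ∑ i, (MvPolynomial.X i) ^ 2 with hr2
  set Q : Fin n → MvPolynomial (Fin n) ℂ :=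
    fun k => 2 * lin b * MvPolynomial.X k - r2 * C (b k) with hQ
  set Y : Fin n → MvPolynomial (Fin n) ℂ := fun k => X k - Q k with hY
  have hdQ : ∀ j k, pderiv j (Q k) = 2 * C (b j) * MvPolynomial.X k
      + (if j = k then 2 * lin b else 0) - 2 * MvPolynomial.X j * C (b k) := by
    intro j k
    simp only [hQ, hlin, hr2, map_sub, pderiv_mul, CK.pderiv_lin, CK.pderiv_r2, CK.pX,
      pderiv_C, CK.pderiv_two, mul_zero, add_zero, zero_mul, zero_add]
    split_ifs with h <;> ring
  have hdQ2 : ∀ i j k, pderiv i (pderiv j (Q k)) =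
      C (2 * ((if i = k then b j else 0) + (if j = k then b i else 0)
        - (if i = j then b k else 0))) := by
    intro i j k
    rw [hdQ]
    simp only [hlin, map_sub, map_add, pderiv_mul, CK.pderiv_lin, CK.pX, pderiv_C,
      CK.pderiv_two, apply_ite (pderiv i), map_zero, mul_zero, add_zero, zero_mul,
      zero_add, mul_one]
    split_ifs <;> simp only [C_add, C_sub, C_mul, C_0, map_ofNat] <;> ring
  have hdX2 : ∀ i j k, 2 * pderiv i (pderiv j (X k)) =
      C ((if j = k then mm i else 0) + (if i = k then mm j else 0)
        - (if i = j then mm k else 0)) := by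
    intro i j k
    rw [key i j k, hdμ, hdμ, hdμ]
    split_ifs <;> simp [C_add, C_sub]
  have hdY2 : ∀ i j k, pderiv i (pderiv j (Y k)) = 0 := by
    intro i j k
    apply cancel2
    rw [mul_zero, hY]
    simp only [map_sub]
    rw [mul_sub, hdX2, hdQ2]
    rw [show (2 : MvPolynomial (Fin n) ℂ) = C 2 by rw [map_ofNat], ← C_mul, ← C_sub]
    rw [show ((if j = k then mm i else 0) + (if i = k then mm j else 0)
        - (if i = j then mm k else 0))
      - 2 * (2 * ((if i = k then b j else 0) + (if j = k then b i else 0)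
        - (if i = j then b k else 0))) = 0 from by
      simp only [hb]
      split_ifs <;> ring]
    rw [C_0]
  -- Step D: Y is affine
  set a : Fin n → ℂ := fun k => constantCoeff (Y k) with ha
  set L : Fin n → Fin n → ℂ := fun k i => constantCoeff (pderiv i (Y k)) with hL
  have hYaff : ∀ k, Y k = C (a k) + ∑ i, C (L k i) * MvPolynomial.X i := by
    intro k
    have := CK.eq_affine (Y k) (fun i j => hdY2 i j k)
    simpa using this
  have hdY : ∀ i k, pderiv i (Y k) = C (L k i) := by
    intro i k
    conv_lhs => rw [hYaff k]
    rw [map_add, pderiv_C, CK.pderiv_lin, zero_add]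
  -- Step E: Killing equation for Y
  have h4lin : ∑ i, C (mm i) * MvPolynomial.X i = 4 * lin b := by
    rw [hlin, Finset.mul_sum]
    apply Finset.sum_congr rfl
    intro i _
    rw [hb, ← mul_assoc, show (4 : MvPolynomial (Fin n) ℂ) = C 4 by rw [map_ofNat], ← C_mul]
    congr 1
    ring
  have hLskew : ∀ i j, L j i + L i j = if i = j then m0 else 0 := by
    intro i j
    have h1 : pderiv i (Y j) + pderiv j (Y i) = if i = j then C m0 else 0 := by
      have hk := hkill i j
      by_cases h : i = j
      · subst h
        rw [hμaff, h4lin, if_pos rfl] at hk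
        simp only [hY, map_sub, hdQ, eq_self_iff_true, if_true]
        linear_combination hk
      · rw [if_neg h] at hk
        simp only [hY, map_sub, hdQ, if_neg h, if_neg (Ne.symm h)]
        linear_combination hk
    rw [hdY, hdY] at h1
    have h2 := congrArg constantCoeff h1
    simpa [apply_ite constantCoeff] using h2
  set c : ℂ := m0 / 2 with hc
  set A : Matrix (Fin n) (Fin n) ℂ := fun j i => L j i - if i = j then c else 0 with hA
  have hskew : ∀ i j, A j i = - A i j := by
    intro i j
    by_cases h : i = j
    · subst h
      have h1 : L i i + L i i = m0 := by simpa using hLskew i i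
      simp only [hA, hc, eq_self_iff_true, if_true]
      linear_combination h1
    · have h1 : L j i + L i j = 0 := by simpa [h] using hLskew i j
      simp only [hA, if_neg h, if_neg (Ne.symm h), sub_zero]
      linear_combination h1
  have hform : ∀ j, X j = C (a j) + (∑ i, C (A j i) * MvPolynomial.X i)
      + C c * MvPolynomial.X j + 2 * lin b * MvPolynomial.X j - r2 * C (b j) := by
    intro j
    have hx : X j = Y j + Q j := by rw [hY]; ring
    rw [hx, hYaff j, hQ]
    have hsplit : ∑ i, C (L j i) * MvPolynomial.X i
        = (∑ i, C (A j i) * MvPolynomial.X i) + C c * MvPolynomial.X j := by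
      have step : ∀ i, C (L j i) * MvPolynomial.X i = C (A j i) * MvPolynomial.X i
          + (if i = j then C c * MvPolynomial.X i else 0) := by
        intro i
        by_cases h : i = j
        · subst h
          simp only [hA, C_sub, eq_self_iff_true, if_true]
          ring
        · simp [hA, h]
      rw [Finset.sum_congr rfl (fun i _ => step i), Finset.sum_add_distrib,
        Finset.sum_ite_eq' Finset.univ j (fun i => C c * MvPolynomial.X i)]
      simp
    rw [hsplit]
    ring
  -- pick helper for uniqueness
  have h0n : 0 < n := by omega
  have h1n : 1 < n := by omega
  set j0 : Fin n := ⟨0, h0n⟩ with hj0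
  set j1 : Fin n := ⟨1, h1n⟩ with hj1
  set pick : Fin n → Fin n := fun j => if j = j0 then j1 else j0 with hpickdef
  have hpick : ∀ j, pick j ≠ j := by
    intro j
    rw [hpickdef]
    by_cases h : j = j0
    · subst h
      simp only [if_pos rfl]
      intro hh
      exact absurd (congrArg Fin.val hh) (by simp [hj0, hj1])
    · simpa [h] using Ne.symm h
  -- extraction lemma
  have extract : ∀ q : (Fin n → ℂ) × (Fin n → ℂ) × ℂ × Matrix (Fin n) (Fin n) ℂ,
      ((∀ i j : Fin n, q.2.2.2 j i = -q.2.2.2 i j) ∧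
      ∀ j : Fin n,
        X j = C (q.1 j) + (∑ i, C (q.2.2.2 j i) * MvPolynomial.X i)
          + C q.2.2.1 * MvPolynomial.X j
          + 2 * (∑ i, C (q.2.1 i) * MvPolynomial.X i) * MvPolynomial.X j
          - (∑ i, (MvPolynomial.X i) ^ 2) * C (q.2.1 j)) →
      q = (fun j => constantCoeff (X j),
        fun j => - constantCoeff (pderiv (pick j) (pderiv (pick j) (X j))) / 2,
        constantCoeff (pderiv j0 (X j0)),
        fun j k => constantCoeff (pderiv k (X j))
          - if k = j then constantCoeff (pderiv j0 (X j0)) else 0) := by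
    rintro ⟨a', b', c', A'⟩ ⟨hsk, hfm⟩
    simp only at hsk hfm
    have hA'diag : ∀ j, A' j j = 0 := fun j => CharZero.eq_neg_self_iff.mp (hsk j j)
    have hcc : ∀ j, constantCoeff (X j) = a' j := by
      intro j
      rw [hfm j]
      simp only [map_add, map_sub, map_mul, map_sum, map_pow, map_ofNat, constantCoeff_C,
        constantCoeff_X, mul_zero, zero_mul, add_zero, zero_add, sub_zero,
        ne_eq, OfNat.ofNat_ne_zero, not_false_eq_true, zero_pow, Finset.sum_const_zero]
    have hD : ∀ k j, pderiv k (X j) = C (A' j k) + (if k = j then C c' else 0)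
        + (2 * C (b' k) * MvPolynomial.X j
          + (if k = j then 2 * (∑ i, C (b' i) * MvPolynomial.X i) else 0))
        - 2 * MvPolynomial.X k * C (b' j) := by
      intro k j
      rw [hfm j]
      simp only [map_add, map_sub, pderiv_mul, pderiv_C, CK.pderiv_lin, CK.pderiv_r2,
        CK.pX, CK.pderiv_two, mul_zero, add_zero, zero_mul, zero_add]
      split_ifs with h <;> ring
    have hccD : ∀ k j, constantCoeff (pderiv k (X j)) = A' j k + (if k = j then c' else 0) := by
      intro k j
      rw [hD]
      simp only [map_add, map_sub, map_mul, map_sum, map_ofNat, apply_ite constantCoeff,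
        constantCoeff_C, constantCoeff_X, mul_zero, zero_mul, add_zero, zero_add,
        sub_zero, map_zero, Finset.sum_const_zero, ite_self]
    have hc' : c' = constantCoeff (pderiv j0 (X j0)) := by
      rw [hccD, hA'diag, if_pos rfl, zero_add]
    have hD2 : ∀ k j, k ≠ j → pderiv k (pderiv k (X j)) = C (-2 * b' j) := by
      intro k j hkj
      rw [hD k j, if_neg hkj, if_neg hkj]
      simp only [map_sub, map_add, add_zero, pderiv_C, pderiv_mul, CK.pderiv_two,
        CK.pderiv_lin, CK.pX, if_neg hkj, eq_self_iff_true, if_true, zero_mul,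
        zero_add, mul_zero, mul_one, add_zero]
      simp only [C_mul, map_neg, map_ofNat]
      ring
    have hb' : ∀ j, b' j = - constantCoeff (pderiv (pick j) (pderiv (pick j) (X j))) / 2 := by
      intro j
      rw [hD2 _ _ (hpick j), constantCoeff_C]
      ring
    refine Prod.ext ?_ (Prod.ext ?_ (Prod.ext ?_ ?_))
    · exact funext fun j => (hcc j).symm
    · exact funext hb'
    · exact hc'
    · funext j k
      simp only
      rw [hccD, ← hc']
      split_ifs <;> ring
  refine ⟨⟨a, b, c, A⟩, ⟨hskew, hform⟩, ?_⟩
  intro q hq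
  rw [extract q hq, ← extract ⟨a, b, c, A⟩ ⟨hskew, hform⟩]
end
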